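/- arXiv:2110.14611 — 5 statements merged into one kernel-verified Lean document; each statement's English description precedes it below -/
import Mathlib

section
/- The out-of-order block Gibbs kernel K*((y,z,x),(dy',dz',dx')) = Π_{X|Z}(dx'|z') Π_{Z|XY}(dz'|x,y') Π_{Y|XZ}(dy'|x,z) has invariant probability measure Π*(dx,dy,dz) = Π_{X|Z}(dx|z) Π_{YZ}(dy,dz); that is, ∫ K*((y,z,x),·) Π*(dx,dy,dz) = Π*(·). -/
open MeasureTheory ProbabilityTheory

noncomputable def tvDist {E : Type*} [MeasurableSpace E] (μ ν : Measure E) : ℝ :=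
  ⨆ A : {A : Set E // MeasurableSet A}, |(μ A.1).toReal - (ν A.1).toReal|

noncomputable def kpow {E : Type*} [MeasurableSpace E] (P : Kernel E E) : ℕ → Kernel E E
  | 0 => Kernel.id
  | n + 1 => (kpow P n) ∘ₖ P

section Aux

variable {α β γ : Type*} [MeasurableSpace α] [MeasurableSpace β] [MeasurableSpace γ]

lemma aux_bind_map (μ : Measure α) {g : α → β} (hg : Measurable g)
    {f : β → Measure γ} (hf : Measurable f) :
    (μ.map g).bind f = μ.bind (fun a => f (g a)) := by
  ext s hs
  rw [Measure.bind_apply hs hf.aemeasurable, Measure.bind_apply hs (show Measurable fun a => f (g a) from hf.comp hg).aemeasurable,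
    lintegral_map (show Measurable fun b => f b s from (Measure.measurable_coe hs).comp hf) hg]

lemma aux_measurable_kernelMap (κ : Kernel α β) [IsSFiniteKernel κ] :
    Measurable fun a => (κ a).map (Prod.mk a) := by
  apply Measure.measurable_of_measurable_coe
  intro s hs
  simp_rw [Measure.map_apply measurable_prodMk_left hs]
  exact Kernel.measurable_kernel_prodMk_left hs

lemma aux_measurable_map_kernel (κ : Kernel α β) [IsSFiniteKernel κ]
    {g : α × β → γ} (hg : Measurable g) :
    Measurable fun a => (κ a).map (fun b => g (a, b)) := by
  have h : (fun a => (κ a).map (fun b => g (a, b))) =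
      fun a => ((κ a).map (Prod.mk a)).map g := by
    funext a
    rw [Measure.map_map hg measurable_prodMk_left]
    rfl
  rw [h]
  exact (Measure.measurable_map g hg).comp (aux_measurable_kernelMap κ)

lemma aux_measurable_bind_kernel (κ : Kernel α β) [IsSFiniteKernel κ]
    {f : α × β → Measure γ} (hf : Measurable f) :
    Measurable fun a => (κ a).bind (fun b => f (a, b)) := by
  have h : (fun a => (κ a).bind (fun b => f (a, b))) =
      fun a => ((κ a).map (Prod.mk a)).bind f := by
    funext a; rw [aux_bind_map _ measurable_prodMk_left hf]
  rw [h]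
  exact (Measure.measurable_bind' hf).comp (aux_measurable_kernelMap κ)

lemma aux_compProd_eq_bind (μ : Measure α) [SFinite μ] (κ : Kernel α β) [IsSFiniteKernel κ] :
    μ ⊗ₘ κ = μ.bind (fun a => (κ a).map (Prod.mk a)) := by
  ext s hs
  rw [Measure.compProd_apply hs, Measure.bind_apply hs (aux_measurable_kernelMap κ).aemeasurable]
  refine lintegral_congr fun a => ?_
  rw [Measure.map_apply measurable_prodMk_left hs]

lemma aux_bind_compProd (μ : Measure α) [SFinite μ] (κ : Kernel α β) [IsSFiniteKernel κ]
    {f : α × β → Measure γ} (hf : Measurable f) :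
    (μ ⊗ₘ κ).bind f = μ.bind (fun a => (κ a).bind (fun b => f (a, b))) := by
  rw [aux_compProd_eq_bind, Measure.bind_bind (aux_measurable_kernelMap κ).aemeasurable hf.aemeasurable]
  congr 1
  funext a
  rw [aux_bind_map _ measurable_prodMk_left hf]

end Aux

section AuxDefs

variable {X Y Z : Type*} [MeasurableSpace X] [MeasurableSpace Y] [MeasurableSpace Z]

noncomputable def auxH (PXgZ : Kernel Z X) : Y × Z → Measure (Y × Z × X) :=
  fun r => (PXgZ r.2).map (fun x => (r.1, r.2, x))

noncomputable def auxG (PXgZ : Kernel Z X) (PZgXY : Kernel (X × Y) Z) :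
    X × Y → Measure (Y × Z × X) :=
  fun q => (PZgXY q).bind (fun z' => auxH PXgZ (q.2, z'))

noncomputable def auxF (PXgZ : Kernel Z X) (PYgXZ : Kernel (X × Z) Y)
    (PZgXY : Kernel (X × Y) Z) : X × Z → Measure (Y × Z × X) :=
  fun q => (PYgXZ q).bind (fun y' => auxG PXgZ PZgXY (q.1, y'))

lemma auxH_measurable (PXgZ : Kernel Z X) [IsMarkovKernel PXgZ] :
    Measurable (auxH (Y := Y) PXgZ) :=
  aux_measurable_map_kernel (PXgZ.comap (Prod.snd : Y × Z → Z) measurable_snd)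
    (g := fun w : (Y × Z) × X => (w.1.1, w.1.2, w.2)) (by fun_prop)

lemma auxG_measurable (PXgZ : Kernel Z X) [IsMarkovKernel PXgZ]
    (PZgXY : Kernel (X × Y) Z) [IsMarkovKernel PZgXY] :
    Measurable (auxG PXgZ PZgXY) :=
  aux_measurable_bind_kernel PZgXY
    (f := fun w : (X × Y) × Z => auxH PXgZ (w.1.2, w.2))
    ((auxH_measurable PXgZ).comp (by fun_prop))

lemma auxF_measurable (PXgZ : Kernel Z X) [IsMarkovKernel PXgZ]
    (PYgXZ : Kernel (X × Z) Y) [IsMarkovKernel PYgXZ]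
    (PZgXY : Kernel (X × Y) Z) [IsMarkovKernel PZgXY] :
    Measurable (auxF PXgZ PYgXZ PZgXY) :=
  aux_measurable_bind_kernel PYgXZ
    (f := fun w : (X × Z) × Y => auxG PXgZ PZgXY (w.1.1, w.2))
    ((auxG_measurable PXgZ PZgXY).comp (by fun_prop))

end AuxDefs

/-- The out-of-order block Gibbs kernel `K*` has invariant probability measure
`Π*(dx,dy,dz) = Π_{X|Z}(dx|z) Π_{YZ}(dy,dz)` (as a measure on Y × Z × X). -/
theorem outOfOrder_invariant
    {X Y Z : Type*} [MeasurableSpace X] [MeasurableSpace Y] [MeasurableSpace Z]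
    (Pi : Measure (X × Y × Z)) [IsProbabilityMeasure Pi]
    (PXgZ : Kernel Z X) [IsMarkovKernel PXgZ]
    (PYgXZ : Kernel (X × Z) Y) [IsMarkovKernel PYgXZ]
    (PZgXY : Kernel (X × Y) Z) [IsMarkovKernel PZgXY]
    (hXgZ : Pi.map (fun p : X × Y × Z => (p.2.2, p.1)) = (Pi.map fun p : X × Y × Z => p.2.2) ⊗ₘ PXgZ)
    (hYgXZ : Pi.map (fun p : X × Y × Z => ((p.1, p.2.2), p.2.1)) = (Pi.map fun p : X × Y × Z => (p.1, p.2.2)) ⊗ₘ PYgXZ)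
    (hZgXY : Pi.map (fun p : X × Y × Z => ((p.1, p.2.1), p.2.2)) = (Pi.map fun p : X × Y × Z => (p.1, p.2.1)) ⊗ₘ PZgXY)
    (Kstar : Kernel (Y × Z × X) (Y × Z × X))
    (hKstar : ∀ p : Y × Z × X, Kstar p =
      (PYgXZ (p.2.2, p.2.1)).bind fun y' =>
        (PZgXY (p.2.2, y')).bind fun z' =>
          (PXgZ z').map fun x' => (y', z', x'))
    (PiStar : Measure (Y × Z × X))
    (hPiStar : PiStar = (Pi.map fun p : X × Y × Z => (p.2.1, p.2.2)).bind fun q =>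
        (PXgZ q.2).map fun x => (q.1, q.2, x))
    :
    PiStar.bind (fun p => Kstar p) = PiStar := by
  have hHm : Measurable (auxH (Y := Y) PXgZ) := auxH_measurable PXgZ
  have hGm : Measurable (auxG PXgZ PZgXY) := auxG_measurable PXgZ PZgXY
  have hFm : Measurable (auxF PXgZ PYgXZ PZgXY) := auxF_measurable PXgZ PYgXZ PZgXY
  have hmZ : Measurable fun p : X × Y × Z => p.2.2 := measurable_snd.snd
  have hmXZ : Measurable fun p : X × Y × Z => (p.1, p.2.2) :=
    measurable_fst.prodMk measurable_snd.snd
  have hmXY : Measurable fun p : X × Y × Z => (p.1, p.2.1) :=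
    measurable_fst.prodMk measurable_snd.fst
  have hmYZ : Measurable fun p : X × Y × Z => (p.2.1, p.2.2) :=
    measurable_snd.fst.prodMk measurable_snd.snd
  haveI : IsProbabilityMeasure (Pi.map fun p : X × Y × Z => p.2.2) :=
    Measure.isProbabilityMeasure_map hmZ.aemeasurable
  haveI : IsProbabilityMeasure (Pi.map fun p : X × Y × Z => (p.1, p.2.2)) :=
    Measure.isProbabilityMeasure_map hmXZ.aemeasurable
  haveI : IsProbabilityMeasure (Pi.map fun p : X × Y × Z => (p.1, p.2.1)) :=
    Measure.isProbabilityMeasure_map hmXY.aemeasurable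
  -- measurabilities of the composed measure-valued maps
  have hf1 : Measurable fun p : Y × Z × X => auxF PXgZ PYgXZ PZgXY (p.2.2, p.2.1) :=
    hFm.comp (measurable_snd.snd.prodMk measurable_snd.fst)
  have hfZX : Measurable fun q : Z × X => auxF PXgZ PYgXZ PZgXY (q.2, q.1) :=
    hFm.comp (measurable_snd.prodMk measurable_fst)
  have hf2 : Measurable fun w : (X × Z) × Y => auxG PXgZ PZgXY (w.1.1, w.2) :=
    hGm.comp (measurable_fst.fst.prodMk measurable_snd)
  have hf3 : Measurable fun w : (X × Y) × Z => auxH (Y := Y) PXgZ (w.1.2, w.2) :=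
    hHm.comp (measurable_fst.snd.prodMk measurable_snd)
  calc PiStar.bind (fun p => Kstar p)
      = PiStar.bind (fun p => auxF PXgZ PYgXZ PZgXY (p.2.2, p.2.1)) := by
        refine congrArg _ ?_
        funext p
        rw [hKstar]
        rfl
    _ = ((Pi.map fun p : X × Y × Z => (p.2.1, p.2.2)).bind (auxH PXgZ)).bind
          (fun p => auxF PXgZ PYgXZ PZgXY (p.2.2, p.2.1)) := by
        rw [hPiStar]; rfl
    _ = (Pi.map fun p : X × Y × Z => (p.2.1, p.2.2)).bind
          (fun r => (auxH (Y := Y) PXgZ r).bind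
            (fun p => auxF PXgZ PYgXZ PZgXY (p.2.2, p.2.1))) :=
        Measure.bind_bind hHm.aemeasurable hf1.aemeasurable
    _ = (Pi.map fun p : X × Y × Z => (p.2.1, p.2.2)).bind
          (fun r => (PXgZ r.2).bind (fun x => auxF PXgZ PYgXZ PZgXY (x, r.2))) := by
        refine congrArg _ ?_
        funext r
        exact aux_bind_map (PXgZ r.2) (by fun_prop : Measurable fun x : X => (r.1, r.2, x)) hf1
    _ = ((Pi.map fun p : X × Y × Z => (p.2.1, p.2.2)).map Prod.snd).bind
          (fun z => (PXgZ z).bind (fun x => auxF PXgZ PYgXZ PZgXY (x, z))) :=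
        (aux_bind_map _ measurable_snd
          (aux_measurable_bind_kernel PXgZ
            (f := fun w : Z × X => auxF PXgZ PYgXZ PZgXY (w.2, w.1)) hfZX)).symm
    _ = (Pi.map fun p : X × Y × Z => p.2.2).bind
          (fun z => (PXgZ z).bind (fun x => auxF PXgZ PYgXZ PZgXY (x, z))) := by
        rw [Measure.map_map measurable_snd hmYZ]
        rfl
    _ = ((Pi.map fun p : X × Y × Z => p.2.2) ⊗ₘ PXgZ).bind
          (fun q => auxF PXgZ PYgXZ PZgXY (q.2, q.1)) :=
        (aux_bind_compProd _ PXgZ hfZX).symm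
    _ = (Pi.map fun p : X × Y × Z => (p.2.2, p.1)).bind
          (fun q => auxF PXgZ PYgXZ PZgXY (q.2, q.1)) := by rw [hXgZ]
    _ = Pi.bind (fun p => auxF PXgZ PYgXZ PZgXY (p.1, p.2.2)) :=
        aux_bind_map Pi (hmZ.prodMk measurable_fst) hfZX
    _ = (Pi.map fun p : X × Y × Z => (p.1, p.2.2)).bind (auxF PXgZ PYgXZ PZgXY) :=
        (aux_bind_map Pi hmXZ hFm).symm
    _ = ((Pi.map fun p : X × Y × Z => (p.1, p.2.2)) ⊗ₘ PYgXZ).bind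
          (fun w => auxG PXgZ PZgXY (w.1.1, w.2)) :=
        (aux_bind_compProd _ PYgXZ hf2).symm
    _ = (Pi.map fun p : X × Y × Z => ((p.1, p.2.2), p.2.1)).bind
          (fun w => auxG PXgZ PZgXY (w.1.1, w.2)) := by rw [hYgXZ]
    _ = Pi.bind (fun p => auxG PXgZ PZgXY (p.1, p.2.1)) :=
        aux_bind_map Pi (hmXZ.prodMk measurable_snd.fst) hf2
    _ = (Pi.map fun p : X × Y × Z => (p.1, p.2.1)).bind (auxG PXgZ PZgXY) :=
        (aux_bind_map Pi hmXY hGm).symm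
    _ = ((Pi.map fun p : X × Y × Z => (p.1, p.2.1)) ⊗ₘ PZgXY).bind
          (fun w => auxH (Y := Y) PXgZ (w.1.2, w.2)) :=
        (aux_bind_compProd _ PZgXY hf3).symm
    _ = (Pi.map fun p : X × Y × Z => ((p.1, p.2.1), p.2.2)).bind
          (fun w => auxH (Y := Y) PXgZ (w.1.2, w.2)) := by rw [hZgXY]
    _ = Pi.bind (fun p => auxH (Y := Y) PXgZ (p.2.1, p.2.2)) :=
        aux_bind_map Pi (hmXY.prodMk measurable_snd.snd) hf3
    _ = (Pi.map fun p : X × Y × Z => (p.2.1, p.2.2)).bind (auxH PXgZ) :=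
        (aux_bind_map Pi hmYZ hHm).symm
    _ = PiStar := by rw [hPiStar]; rfl
end

section
/- For every (x,y,z) and n ≥ 2, ‖K^n((x,y,z),·) − Π(·)‖ ≤ ‖K_Z^{n−1}(z,·) − Π_Z(·)‖ ≤ ‖ν_z K*^{(n−2)}(·) − Π*(·)‖. -/
open MeasureTheory ProbabilityTheory
open scoped ENNReal

namespace BlockGibbsAux

variable {α β γ : Type*} [MeasurableSpace α] [MeasurableSpace β] [MeasurableSpace γ]

lemma bind_map' (μ : Measure α) {f : α → β} {g : β → Measure γ} (hf : Measurable f)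
    (hg : Measurable g) : (μ.map f).bind g = μ.bind (fun a => g (f a)) := by
  rw [← Measure.bind_dirac_eq_map μ hf, Measure.bind_bind (f := fun x => Measure.dirac (f x)) (Measure.measurable_dirac.comp hf).aemeasurable hg.aemeasurable]
  simp only [Measure.dirac_bind hg]

lemma map_bind' (μ : Measure α) {f : α → Measure β} {g : β → γ} (hf : Measurable f)
    (hg : Measurable g) : (μ.bind f).map g = μ.bind (fun a => (f a).map g) := by
  rw [← Measure.bind_dirac_eq_map _ hg, Measure.bind_bind (g := fun x => Measure.dirac (g x)) hf.aemeasurable (Measure.measurable_dirac.comp hg).aemeasurable]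
  simp only [Measure.bind_dirac_eq_map _ hg]

lemma isProbabilityMeasure_bind {μ : Measure α} [IsProbabilityMeasure μ] {f : α → Measure β}
    (hf : Measurable f) (h : ∀ a, IsProbabilityMeasure (f a)) :
    IsProbabilityMeasure (μ.bind f) := by
  constructor
  rw [Measure.bind_apply MeasurableSet.univ hf.aemeasurable]
  have : ∀ a, f a Set.univ = 1 := fun a => (h a).measure_univ
  simp [this]

lemma kpow_markov (P : Kernel α α) [IsMarkovKernel P] (n : ℕ) : IsMarkovKernel (kpow P n) := by
  induction n with
  | zero => rw [kpow, Kernel.id]; infer_instance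
  | succ n ih => rw [kpow]; exact Kernel.IsMarkovKernel.comp (κ := P) (η := kpow P n)

lemma kpow_succ (P : Kernel α α) (n : ℕ) (a : α) :
    kpow P (n + 1) a = (P a).bind (kpow P n) := by
  rw [kpow, Kernel.comp_apply]

lemma kpow_zero_bind (P : Kernel α α) (μ : Measure α) : μ.bind (kpow P 0) = μ := by
  have h : ⇑(kpow P 0) = Measure.dirac := funext fun a => Kernel.id_apply a
  rw [h, Measure.bind_dirac]

lemma kpow_succ' (P : Kernel α α) (n : ℕ) (a : α) :
    kpow P (n + 1) a = (kpow P n a).bind P := by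
  induction n generalizing a with
  | zero =>
      rw [kpow_succ, kpow_zero_bind]
      have h : ⇑(kpow P 0) = Measure.dirac := funext fun a => Kernel.id_apply a
      rw [h, Measure.dirac_bind P.measurable]
  | succ n ih =>
      have hih : ⇑(kpow P (n + 1)) = fun b => (kpow P n b).bind P := funext fun b => ih b
      calc kpow P (n + 2) a = (P a).bind (kpow P (n + 1)) := kpow_succ _ _ _
        _ = (P a).bind (fun b => (kpow P n b).bind P) := by rw [hih]
        _ = ((P a).bind (kpow P n)).bind P :=
            (Measure.bind_bind (kpow P n).measurable.aemeasurable P.measurable.aemeasurable).symm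
        _ = (kpow P (n + 1) a).bind P := by rw [kpow_succ]

noncomputable def Jk (κ : Kernel α β) [IsSFiniteKernel κ] : Kernel α (α × β) :=
  Kernel.id ⊗ₖ (κ.comap Prod.fst measurable_fst)

lemma Jk_apply (κ : Kernel α β) [IsSFiniteKernel κ] (a : α) :
    Jk κ a = (κ a).map (fun b => (a, b)) := by
  ext s hs
  rw [Jk, Kernel.compProd_apply hs, Kernel.id_apply,
    Measure.map_apply measurable_prodMk_left hs]
  simp only [Kernel.comap_apply]
  exact lintegral_dirac' a (measurable_measure_prodMk_left hs)

instance Jk_markov (κ : Kernel α β) [IsMarkovKernel κ] : IsMarkovKernel (Jk κ) := by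
  rw [Jk, Kernel.id]; infer_instance

lemma measurable_mapPair (κ : Kernel α β) [IsSFiniteKernel κ] :
    Measurable (fun a => (κ a).map (fun b => (a, b))) := by
  have h : (fun a => (κ a).map (fun b => (a, b))) = ⇑(Jk κ) := funext fun a => (Jk_apply κ a).symm
  rw [h]; exact (Jk κ).measurable

lemma compProd_eq_bind (μ : Measure α) [SFinite μ] (κ : Kernel α β) [IsSFiniteKernel κ] :
    μ ⊗ₘ κ = μ.bind (fun a => (κ a).map (fun b => (a, b))) := by
  ext s hs
  rw [Measure.compProd_apply hs, Measure.bind_apply hs (measurable_mapPair κ).aemeasurable]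
  refine lintegral_congr fun a => ?_
  rw [Measure.map_apply measurable_prodMk_left hs]

lemma snd_compProd' (μ : Measure α) [SFinite μ] (κ : Kernel α β) [IsSFiniteKernel κ] :
    (μ ⊗ₘ κ).map Prod.snd = μ.bind κ := by
  ext s hs
  rw [Measure.map_apply measurable_snd hs, Measure.compProd_apply (measurable_snd hs),
    Measure.bind_apply hs κ.measurable.aemeasurable]
  rfl

lemma tvDist_bddAbove (μ ν : Measure α) [IsFiniteMeasure μ] [IsFiniteMeasure ν] :
    BddAbove (Set.range fun A : {A : Set α // MeasurableSet A} =>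
      |(μ A.1).toReal - (ν A.1).toReal|) := by
  refine ⟨(μ Set.univ).toReal + (ν Set.univ).toReal, ?_⟩
  rintro r ⟨A, rfl⟩
  have h1 : (μ A.1).toReal ≤ (μ Set.univ).toReal :=
    ENNReal.toReal_mono (measure_ne_top _ _) (measure_mono (Set.subset_univ _))
  have h2 : (ν A.1).toReal ≤ (ν Set.univ).toReal :=
    ENNReal.toReal_mono (measure_ne_top _ _) (measure_mono (Set.subset_univ _))
  have h3 : (0:ℝ) ≤ (μ A.1).toReal := ENNReal.toReal_nonneg
  have h4 : (0:ℝ) ≤ (ν A.1).toReal := ENNReal.toReal_nonneg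
  rw [abs_sub_le_iff]
  constructor <;> linarith

lemma abs_sub_le_tvDist (μ ν : Measure α) [IsFiniteMeasure μ] [IsFiniteMeasure ν]
    {A : Set α} (hA : MeasurableSet A) :
    |(μ A).toReal - (ν A).toReal| ≤ tvDist μ ν :=
  le_ciSup (tvDist_bddAbove μ ν) (⟨A, hA⟩ : {A : Set α // MeasurableSet A})

lemma tvDist_comm (μ ν : Measure α) : tvDist μ ν = tvDist ν μ := by
  unfold tvDist
  exact iSup_congr fun A => abs_sub_comm _ _

lemma lintegral_diff_le_tvDist (μ ν : Measure α) [IsProbabilityMeasure μ]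
    [IsProbabilityMeasure ν] {f : α → ℝ≥0∞} (hf : Measurable f) (hf1 : ∀ a, f a ≤ 1) :
    (∫⁻ a, f a ∂μ).toReal - (∫⁻ a, f a ∂ν).toReal ≤ tvDist μ ν := by
  obtain ⟨s, hs, hsle, hcle⟩ := hahn_decomposition (μ := μ) (ν := ν)
  have hνμ : ν.restrict s ≤ μ.restrict s := by
    refine Measure.le_iff.2 fun t ht => ?_
    rw [Measure.restrict_apply ht, Measure.restrict_apply ht]
    exact hsle _ (ht.inter hs) Set.inter_subset_right
  have hμν : μ.restrict sᶜ ≤ ν.restrict sᶜ := by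
    refine Measure.le_iff.2 fun t ht => ?_
    rw [Measure.restrict_apply ht, Measure.restrict_apply ht]
    exact hcle _ (ht.inter hs.compl) Set.inter_subset_right
  have hfν : ∫⁻ a, f a ∂ν ≤ 1 := by
    calc ∫⁻ a, f a ∂ν ≤ ∫⁻ _, 1 ∂ν := lintegral_mono hf1
      _ = 1 := by simp
  have hfμ : ∫⁻ a, f a ∂μ ≤ 1 := by
    calc ∫⁻ a, f a ∂μ ≤ ∫⁻ _, 1 ∂μ := lintegral_mono hf1
      _ = 1 := by simp
  have key : ∫⁻ a, f a ∂μ ≤ (μ s - ν s) + ∫⁻ a, f a ∂ν := by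
    rw [← lintegral_add_compl f hs (μ := μ), ← lintegral_add_compl f hs (μ := ν)]
    have e1 : ∫⁻ a in s, f a ∂μ
        = ∫⁻ a, f a ∂(μ.restrict s - ν.restrict s) + ∫⁻ a in s, f a ∂ν := by
      rw [← lintegral_add_measure, Measure.sub_add_cancel_of_le hνμ]
    have e2 : ∫⁻ a, f a ∂(μ.restrict s - ν.restrict s) ≤ μ s - ν s := by
      calc ∫⁻ a, f a ∂(μ.restrict s - ν.restrict s)
          ≤ ∫⁻ _, 1 ∂(μ.restrict s - ν.restrict s) := lintegral_mono hf1
        _ = (μ.restrict s - ν.restrict s) Set.univ := by simp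
        _ = μ s - ν s := by
            rw [Measure.sub_apply MeasurableSet.univ hνμ, Measure.restrict_apply_univ,
              Measure.restrict_apply_univ]
    have e3 : ∫⁻ a in sᶜ, f a ∂μ ≤ ∫⁻ a in sᶜ, f a ∂ν := lintegral_mono' hμν le_rfl
    calc ∫⁻ a in s, f a ∂μ + ∫⁻ a in sᶜ, f a ∂μ
        ≤ (∫⁻ a, f a ∂(μ.restrict s - ν.restrict s) + ∫⁻ a in s, f a ∂ν)
            + ∫⁻ a in sᶜ, f a ∂ν := by rw [← e1]; exact add_le_add le_rfl e3
      _ ≤ ((μ s - ν s) + ∫⁻ a in s, f a ∂ν) + ∫⁻ a in sᶜ, f a ∂ν :=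
            add_le_add (add_le_add e2 le_rfl) le_rfl
      _ = (μ s - ν s) + (∫⁻ a in s, f a ∂ν + ∫⁻ a in sᶜ, f a ∂ν) := by ring
  have hsub_ne : μ s - ν s ≠ ⊤ :=
    ne_top_of_le_ne_top (measure_ne_top μ s) tsub_le_self
  have key2 : (∫⁻ a, f a ∂μ).toReal ≤ (μ s - ν s).toReal + (∫⁻ a, f a ∂ν).toReal := by
    have := ENNReal.toReal_mono (by
        exact ENNReal.add_ne_top.2 ⟨hsub_ne, ne_top_of_le_ne_top ENNReal.one_ne_top hfν⟩) key
    rwa [ENNReal.toReal_add hsub_ne (ne_top_of_le_ne_top ENNReal.one_ne_top hfν)] at this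
  have hsub : (μ s - ν s).toReal = (μ s).toReal - (ν s).toReal :=
    ENNReal.toReal_sub_of_le (hsle s hs subset_rfl) (measure_ne_top μ s)
  have hfin : (μ s).toReal - (ν s).toReal ≤ tvDist μ ν :=
    (le_abs_self _).trans (abs_sub_le_tvDist μ ν hs)
  linarith [key2, hsub ▸ key2]

lemma lintegral_abs_le_tvDist (μ ν : Measure α) [IsProbabilityMeasure μ]
    [IsProbabilityMeasure ν] {f : α → ℝ≥0∞} (hf : Measurable f) (hf1 : ∀ a, f a ≤ 1) :
    |(∫⁻ a, f a ∂μ).toReal - (∫⁻ a, f a ∂ν).toReal| ≤ tvDist μ ν := by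
  rw [abs_sub_le_iff]
  refine ⟨lintegral_diff_le_tvDist μ ν hf hf1, ?_⟩
  rw [tvDist_comm]
  exact lintegral_diff_le_tvDist ν μ hf hf1

lemma tvDist_bind_le (μ ν : Measure α) [IsProbabilityMeasure μ] [IsProbabilityMeasure ν]
    (κ : Kernel α β) [IsMarkovKernel κ] :
    tvDist (μ.bind κ) (ν.bind κ) ≤ tvDist μ ν := by
  refine ciSup_le fun A => ?_
  rw [Measure.bind_apply A.2 κ.measurable.aemeasurable, Measure.bind_apply A.2 κ.measurable.aemeasurable]
  exact lintegral_abs_le_tvDist μ ν (κ.measurable_coe A.2) (fun a => prob_le_one)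

lemma deinit (K : Kernel α α) (KB : Kernel β β) (M : Kernel β α) (π : α → β)
    (hπ : Measurable π) (hKM : ∀ p, K p = M (π p)) (hMπ : ∀ b, (M b).map π = KB b) :
    ∀ (m : ℕ) (p : α), kpow K (m + 1) p = (kpow KB m (π p)).bind M := by
  intro m
  induction m with
  | zero =>
      intro p
      rw [kpow_succ, kpow_zero_bind]
      have h0 : ⇑(kpow KB 0) = Measure.dirac := funext fun b => Kernel.id_apply b
      rw [h0, Measure.dirac_bind M.measurable, hKM]
  | succ m ih =>
      intro p
      have hih : ⇑(kpow K (m + 1)) = fun q => (kpow KB m (π q)).bind M := funext ih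
      have hmeas : Measurable (fun b => (kpow KB m b).bind M) :=
        (Measure.measurable_bind' M.measurable).comp (kpow KB m).measurable
      calc kpow K (m + 2) p = (K p).bind (kpow K (m + 1)) := kpow_succ _ _ _
        _ = (K p).bind (fun q => (kpow KB m (π q)).bind M) := by rw [hih]
        _ = ((K p).map π).bind (fun b => (kpow KB m b).bind M) :=
            (bind_map' _ hπ hmeas).symm
        _ = (KB (π p)).bind (fun b => (kpow KB m b).bind M) := by
            rw [hKM p, hMπ]
        _ = ((KB (π p)).bind (kpow KB m)).bind M :=
            (Measure.bind_bind (kpow KB m).measurable.aemeasurable M.measurable.aemeasurable).symm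
        _ = (kpow KB (m + 1) (π p)).bind M := by rw [kpow_succ]

lemma intertwine (W : Kernel β γ) (Q : Kernel γ γ) (KB : Kernel β β)
    (h : ∀ b, (W b).bind Q = (KB b).bind W) :
    ∀ (m : ℕ) (b : β), (W b).bind (kpow Q m) = (kpow KB m b).bind W := by
  intro m
  induction m with
  | zero =>
      intro b
      rw [kpow_zero_bind]
      have h0 : ⇑(kpow KB 0) = Measure.dirac := funext fun b => Kernel.id_apply b
      rw [h0, Measure.dirac_bind W.measurable]
  | succ m ih =>
      intro b
      have hkq : ⇑(kpow Q (m + 1)) = fun c => (Q c).bind (kpow Q m) :=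
        funext fun c => kpow_succ _ _ _
      have hWk : Measurable (fun b' => (W b').bind (kpow Q m)) :=
        (Measure.measurable_bind' (kpow Q m).measurable).comp W.measurable
      calc (W b).bind (kpow Q (m + 1))
          = (W b).bind (fun c => (Q c).bind (kpow Q m)) := by rw [hkq]
        _ = ((W b).bind Q).bind (kpow Q m) :=
            (Measure.bind_bind Q.measurable.aemeasurable (kpow Q m).measurable.aemeasurable).symm
        _ = ((KB b).bind W).bind (kpow Q m) := by rw [h]
        _ = (KB b).bind (fun b' => (W b').bind (kpow Q m)) :=
            Measure.bind_bind W.measurable.aemeasurable (kpow Q m).measurable.aemeasurable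
        _ = (KB b).bind (fun b' => (kpow KB m b').bind W) := by simp only [ih]
        _ = ((KB b).bind (kpow KB m)).bind W :=
            (Measure.bind_bind (kpow KB m).measurable.aemeasurable W.measurable.aemeasurable).symm
        _ = (kpow KB (m + 1) b).bind W := by rw [kpow_succ]

end BlockGibbsAux
open BlockGibbsAux

set_option maxHeartbeats 1000000

/-- `‖K^n((x,y,z),·) − Π‖ ≤ ‖K_Z^{n-1}(z,·) − Π_Z‖ ≤ ‖ν_z K*^{(n-2)} − Π*‖` for n ≥ 2. -/
theorem blockGibbs_tv_chain
    {X Y Z : Type*} [MeasurableSpace X] [MeasurableSpace Y] [MeasurableSpace Z]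
    (Pi : Measure (X × Y × Z)) [IsProbabilityMeasure Pi]
    (PXgZ : Kernel Z X) [IsMarkovKernel PXgZ]
    (PYgXZ : Kernel (X × Z) Y) [IsMarkovKernel PYgXZ]
    (PZgXY : Kernel (X × Y) Z) [IsMarkovKernel PZgXY]
    (PXYgZ : Kernel Z (X × Y)) [IsMarkovKernel PXYgZ]
    (hXgZ : Pi.map (fun p : X × Y × Z => (p.2.2, p.1)) = (Pi.map fun p : X × Y × Z => p.2.2) ⊗ₘ PXgZ)
    (hYgXZ : Pi.map (fun p : X × Y × Z => ((p.1, p.2.2), p.2.1)) = (Pi.map fun p : X × Y × Z => (p.1, p.2.2)) ⊗ₘ PYgXZ)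
    (hZgXY : Pi.map (fun p : X × Y × Z => ((p.1, p.2.1), p.2.2)) = (Pi.map fun p : X × Y × Z => (p.1, p.2.1)) ⊗ₘ PZgXY)
    (hXYgZ : Pi.map (fun p : X × Y × Z => (p.2.2, (p.1, p.2.1))) = (Pi.map fun p : X × Y × Z => p.2.2) ⊗ₘ PXYgZ)
    (hseq : ∀ z : Z, PXYgZ z = (PXgZ z).bind fun x => (PYgXZ (x, z)).map fun y => (x, y))
    (K : Kernel (X × Y × Z) (X × Y × Z))
    (hK : ∀ p : X × Y × Z, K p = (PXYgZ p.2.2).bind fun q =>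
        (PZgXY q).map fun z' => (q.1, q.2, z'))
    (KZ : Kernel Z Z)
    (hKZ : ∀ z : Z, KZ z = (PXYgZ z).bind fun q => PZgXY q)
    (Kstar : Kernel (Y × Z × X) (Y × Z × X))
    (hKstar : ∀ p : Y × Z × X, Kstar p =
      (PYgXZ (p.2.2, p.2.1)).bind fun y' =>
        (PZgXY (p.2.2, y')).bind fun z' =>
          (PXgZ z').map fun x' => (y', z', x'))
    (PiStar : Measure (Y × Z × X))
    (hPiStar : PiStar = (Pi.map fun p : X × Y × Z => (p.2.1, p.2.2)).bind fun q =>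
        (PXgZ q.2).map fun x => (q.1, q.2, x))
    :
    ∀ (x : X) (y : Y) (z : Z) (y₀ : Y) (n : ℕ), 2 ≤ n →
      tvDist ((kpow K n) (x, y, z)) Pi ≤
          tvDist ((kpow KZ (n - 1)) z) (Pi.map fun p : X × Y × Z => p.2.2) ∧
        tvDist ((kpow KZ (n - 1)) z) (Pi.map fun p : X × Y × Z => p.2.2) ≤
          tvDist (((PXgZ z).map fun x' => (y₀, z, x')).bind fun u => (kpow Kstar (n - 2)) u)
            PiStar := by
  intro x y z y₀ n hn
  obtain ⟨m, rfl⟩ : ∃ m, n = m + 2 := ⟨n - 2, by omega⟩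
  have en1 : m + 2 - 1 = m + 1 := rfl
  have en2 : m + 2 - 2 = m := rfl
  rw [en1, en2]
  -- basic measurable functions
  have hπz : Measurable (fun p : X × Y × Z => p.2.2) := measurable_snd.comp measurable_snd
  have hπs : Measurable (fun p : Y × Z × X => (p.2.1, p.2.2)) :=
    (measurable_fst.comp measurable_snd).prodMk (measurable_snd.comp measurable_snd)
  have hπyz : Measurable (fun p : X × Y × Z => (p.2.1, p.2.2)) :=
    (measurable_fst.comp measurable_snd).prodMk (measurable_snd.comp measurable_snd)
  have hπxy : Measurable (fun p : X × Y × Z => (p.1, p.2.1)) :=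
    measurable_fst.prodMk (measurable_fst.comp measurable_snd)
  have htrip : ∀ (a : Y) (b : Z), Measurable (fun x' : X => ((a, b, x') : Y × Z × X)) :=
    fun a b => measurable_const.prodMk (measurable_const.prodMk measurable_id)
  have hνf : Measurable (fun x' : X => (y₀, z, x')) :=
    measurable_const.prodMk (measurable_const.prodMk measurable_id)
  have hxyw : Measurable (fun w : Z => ((x, y, w) : X × Y × Z)) :=
    measurable_const.prodMk (measurable_const.prodMk measurable_id)
  have hM2meas : Measurable (fun r : (X × Y) × Z => (r.1.1, r.1.2, r.2)) :=
    (measurable_fst.comp measurable_fst).prodMk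
      ((measurable_snd.comp measurable_fst).prodMk measurable_snd)
  have hΦmeas : Measurable (fun r : (Y × Z) × X => (r.1.1, r.1.2, r.2)) :=
    (measurable_fst.comp measurable_fst).prodMk
      ((measurable_snd.comp measurable_fst).prodMk measurable_snd)
  have he1 : Measurable (fun p : X × Y × Z => (p.2.2, (p.1, p.2.1))) := hπz.prodMk hπxy
  have he2 : Measurable (fun p : X × Y × Z => ((p.1, p.2.1), p.2.2)) := hπxy.prodMk hπz
  have hlf : Measurable (fun q : Z × X => ((y₀, q.1, q.2) : Y × Z × X)) :=
    measurable_const.prodMk (measurable_fst.prodMk measurable_snd)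
  -- marginals
  haveI : IsProbabilityMeasure (Pi.map fun p : X × Y × Z => p.2.2) :=
    Measure.isProbabilityMeasure_map hπz.aemeasurable
  haveI : IsProbabilityMeasure (Pi.map fun p : X × Y × Z => (p.1, p.2.1)) :=
    Measure.isProbabilityMeasure_map hπxy.aemeasurable
  haveI : IsProbabilityMeasure (Pi.map fun p : X × Y × Z => (p.2.1, p.2.2)) :=
    Measure.isProbabilityMeasure_map hπyz.aemeasurable
  -- kernels
  set M2 : Kernel (X × Y) (X × Y × Z) :=
    (Jk PZgXY).map (fun r : (X × Y) × Z => (r.1.1, r.1.2, r.2)) with hM2def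
  have hM2 : ∀ q : X × Y, M2 q = (PZgXY q).map (fun w => (q.1, q.2, w)) := by
    intro q
    rw [hM2def, Kernel.map_apply _ hM2meas, Jk_apply,
      Measure.map_map hM2meas measurable_prodMk_left]
    rfl
  haveI : IsMarkovKernel M2 := Kernel.IsMarkovKernel.map _ hM2meas
  set Φ : Kernel (Y × Z) (Y × Z × X) :=
    (Jk (PXgZ.comap Prod.snd measurable_snd)).map (fun r : (Y × Z) × X => (r.1.1, r.1.2, r.2))
    with hΦdef
  have hΦ : ∀ q : Y × Z, Φ q = (PXgZ q.2).map (fun x' => (q.1, q.2, x')) := by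
    intro q
    rw [hΦdef, Kernel.map_apply _ hΦmeas, Jk_apply, Kernel.comap_apply,
      Measure.map_map hΦmeas measurable_prodMk_left]
    rfl
  haveI : IsMarkovKernel Φ := Kernel.IsMarkovKernel.map _ hΦmeas
  -- Markov instances for K, KZ, Kstar
  haveI hKmar : IsMarkovKernel K := by
    constructor; intro p
    rw [hK p,
      show (fun q : X × Y => (PZgXY q).map fun z' => (q.1, q.2, z')) = ⇑M2 from
        funext fun q => (hM2 q).symm]
    exact isProbabilityMeasure_bind M2.measurable fun q => inferInstance
  haveI hKZmar : IsMarkovKernel KZ := by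
    constructor; intro b
    rw [hKZ b]
    exact isProbabilityMeasure_bind PZgXY.measurable fun q => inferInstance
  have hstarfun : ∀ xx : X,
      (fun y' => (PZgXY (xx, y')).bind fun z' => (PXgZ z').map fun x' => (y', z', x'))
        = ⇑(Φ ∘ₖ Jk (PZgXY.comap (fun y' : Y => (xx, y'))
            (measurable_const.prodMk measurable_id))) := by
    intro xx
    funext y'
    rw [Kernel.comp_apply, Jk_apply, bind_map' _ measurable_prodMk_left Φ.measurable,
      Kernel.comap_apply]
    exact congrArg _ (funext fun z' => (hΦ (y', z')).symm)
  haveI hKsmar : IsMarkovKernel Kstar := by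
    constructor; intro p
    rw [hKstar p, hstarfun p.2.2]
    exact isProbabilityMeasure_bind (Kernel.measurable _) fun _ => inferInstance
  -- derived relation for KZ
  have hKZ' : ∀ b : Z, KZ b
      = (PXgZ b).bind fun x' => (PYgXZ (x', b)).bind fun w => PZgXY (x', w) := by
    intro b
    have hfun : (fun x : X => (PYgXZ (x, b)).map fun y_ => (x, y_))
        = ⇑(Jk (PYgXZ.comap (fun x : X => (x, b)) (measurable_id.prodMk measurable_const))) :=
      funext fun x' => by rw [Jk_apply, Kernel.comap_apply]
    rw [hKZ b, hseq b, hfun, Measure.bind_bind (Kernel.measurable _).aemeasurable PZgXY.measurable.aemeasurable]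
    refine congrArg _ (funext fun x' => ?_)
    rw [Jk_apply, Kernel.comap_apply, bind_map' _ measurable_prodMk_left PZgXY.measurable]
  -- two-block marginal identities
  have hbind1 : (Pi.map fun p : X × Y × Z => p.2.2).bind ⇑PXYgZ
      = Pi.map fun p : X × Y × Z => (p.1, p.2.1) := by
    calc (Pi.map fun p : X × Y × Z => p.2.2).bind ⇑PXYgZ
        = ((Pi.map fun p : X × Y × Z => p.2.2) ⊗ₘ PXYgZ).map Prod.snd :=
          (snd_compProd' _ _).symm
      _ = (Pi.map (fun p : X × Y × Z => (p.2.2, (p.1, p.2.1)))).map Prod.snd := by rw [hXYgZ]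
      _ = Pi.map fun p : X × Y × Z => (p.1, p.2.1) := by
          rw [Measure.map_map measurable_snd he1]; rfl
  have hbind2 : (Pi.map fun p : X × Y × Z => (p.1, p.2.1)).bind ⇑PZgXY
      = Pi.map fun p : X × Y × Z => p.2.2 := by
    calc (Pi.map fun p : X × Y × Z => (p.1, p.2.1)).bind ⇑PZgXY
        = ((Pi.map fun p : X × Y × Z => (p.1, p.2.1)) ⊗ₘ PZgXY).map Prod.snd :=
          (snd_compProd' _ _).symm
      _ = (Pi.map (fun p : X × Y × Z => ((p.1, p.2.1), p.2.2))).map Prod.snd := by rw [hZgXY]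
      _ = Pi.map fun p : X × Y × Z => p.2.2 := by
          rw [Measure.map_map measurable_snd he2]; rfl
  have hinv : (Pi.map fun p : X × Y × Z => p.2.2).bind ⇑KZ
      = Pi.map fun p : X × Y × Z => p.2.2 := by
    rw [show ⇑KZ = fun b => (PXYgZ b).bind ⇑PZgXY from funext hKZ,
      ← Measure.bind_bind PXYgZ.measurable.aemeasurable PZgXY.measurable.aemeasurable, hbind1, hbind2]
  -- the kernel M for the first inequality
  set M : Kernel Z (X × Y × Z) := K.comap (fun w : Z => ((x, y, w) : X × Y × Z)) hxyw with hMdef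
  haveI : IsMarkovKernel M := by rw [hMdef]; infer_instance
  have hMval : ∀ b : Z, M b = (PXYgZ b).bind ⇑M2 := by
    intro b
    rw [hMdef, Kernel.comap_apply, hK]
    exact congrArg _ (funext fun q => (hM2 q).symm)
  have hMK : ∀ p : X × Y × Z, K p = M ((fun p : X × Y × Z => p.2.2) p) := by
    intro p
    rw [hMdef, Kernel.comap_apply, hK, hK]
  have hMπ : ∀ b : Z, (M b).map (fun p : X × Y × Z => p.2.2) = KZ b := by
    intro b
    rw [hMval b, map_bind' _ M2.measurable hπz, hKZ b]
    refine congrArg _ (funext fun q => ?_)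
    have hq : Measurable (fun w : Z => ((q.1, q.2, w) : X × Y × Z)) :=
      measurable_const.prodMk (measurable_const.prodMk measurable_id)
    rw [hM2 q, Measure.map_map hπz hq]
    exact Measure.map_id
  have hXY2 : (Pi.map fun p : X × Y × Z => (p.1, p.2.1)).bind ⇑M2 = Pi := by
    have e2 : Pi = ((Pi.map fun p : X × Y × Z => (p.1, p.2.1)) ⊗ₘ PZgXY).map
        (fun r : (X × Y) × Z => (r.1.1, r.1.2, r.2)) := by
      rw [← hZgXY, Measure.map_map hM2meas he2,
        show ((fun r : (X × Y) × Z => (r.1.1, r.1.2, r.2))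
          ∘ (fun p : X × Y × Z => ((p.1, p.2.1), p.2.2))) = id from rfl, Measure.map_id]
    have e3 : (Pi.map fun p : X × Y × Z => (p.1, p.2.1)).bind ⇑M2
        = ((Pi.map fun p : X × Y × Z => (p.1, p.2.1)) ⊗ₘ PZgXY).map
          (fun r : (X × Y) × Z => (r.1.1, r.1.2, r.2)) := by
      rw [compProd_eq_bind, map_bind' _ (measurable_mapPair PZgXY) hM2meas]
      refine congrArg _ (funext fun q => ?_)
      rw [hM2 q, Measure.map_map hM2meas measurable_prodMk_left]
      rfl
    exact e3.trans e2.symm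
  have hPiM : (Pi.map fun p : X × Y × Z => p.2.2).bind ⇑M = Pi := by
    rw [show ⇑M = fun b => (PXYgZ b).bind ⇑M2 from funext hMval,
      ← Measure.bind_bind PXYgZ.measurable.aemeasurable M2.measurable.aemeasurable, hbind1, hXY2]
  have hfirst : kpow K (m + 2) (x, y, z) = (kpow KZ (m + 1) z).bind ⇑M :=
    deinit K KZ M (fun p : X × Y × Z => p.2.2) hπz hMK hMπ (m + 1) (x, y, z)
  haveI := kpow_markov KZ (m + 1)
  haveI := kpow_markov Kstar m
  constructor
  · have heq : tvDist ((kpow K (m + 2)) (x, y, z)) Pi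
        = tvDist ((kpow KZ (m + 1) z).bind ⇑M) (((Pi.map fun p : X × Y × Z => p.2.2)).bind ⇑M)
        := by rw [hfirst, hPiM]
    rw [heq]
    exact tvDist_bind_le (kpow KZ (m + 1) z) (Pi.map fun p : X × Y × Z => p.2.2) M
  -- second inequality
  · set W : Kernel Z (Z × X) := Jk PXgZ with hWdef
    set κA : Kernel (Z × X) Y :=
      PYgXZ.comap (fun q : Z × X => (q.2, q.1)) (measurable_snd.prodMk measurable_fst)
      with hκAdef
    set κB : Kernel ((Z × X) × Y) Z :=
      PZgXY.comap (fun r : (Z × X) × Y => (r.1.2, r.2))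
        ((measurable_snd.comp measurable_fst).prodMk measurable_snd) with hκBdef
    set H' : Kernel (Z × X) Z := κB ∘ₖ Jk κA with hH'def
    have hH' : ∀ q : Z × X, H' q = (PYgXZ (q.2, q.1)).bind fun w => PZgXY (q.2, w) := by
      intro q
      rw [hH'def, Kernel.comp_apply, Jk_apply, bind_map' _ measurable_prodMk_left
        κB.measurable, hκAdef, Kernel.comap_apply]
      exact congrArg _ (funext fun w => by rw [hκBdef, Kernel.comap_apply])
    set H : Kernel (Y × Z × X) Z := H'.comap (fun p : Y × Z × X => (p.2.1, p.2.2)) hπs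
      with hHdef
    have hHap : ∀ p : Y × Z × X, H p = H' (p.2.1, p.2.2) := by
      intro p; rw [hHdef, Kernel.comap_apply]
    have hXH : ∀ b : Z, (PXgZ b).bind (fun x' => H' (b, x')) = KZ b := by
      intro b
      rw [hKZ' b]
      exact congrArg _ (funext fun x' => by rw [hH' (b, x')])
    have hWH : ∀ b : Z, (W b).bind ⇑H' = KZ b := by
      intro b
      rw [hWdef, Jk_apply, bind_map' _ measurable_prodMk_left H'.measurable]
      exact hXH b
    set Λ : Kernel (Z × X) (Y × Z × X) := Kstar.comap (fun q : Z × X => (y₀, q.1, q.2)) hlf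
      with hΛdef
    haveI : IsMarkovKernel Λ := by rw [hΛdef]; infer_instance
    have hΛ : ∀ p : Y × Z × X, Kstar p = Λ ((fun p : Y × Z × X => (p.2.1, p.2.2)) p) := by
      intro p
      rw [hΛdef, Kernel.comap_apply, hKstar, hKstar]
    set Q : Kernel (Z × X) (Z × X) := Λ.map (fun p : Y × Z × X => (p.2.1, p.2.2)) with hQdef
    haveI : IsMarkovKernel Q := by rw [hQdef]; exact Kernel.IsMarkovKernel.map _ hπs
    have hQ : ∀ q : Z × X, Q q = (Λ q).map (fun p : Y × Z × X => (p.2.1, p.2.2)) := by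
      intro q; rw [hQdef, Kernel.map_apply _ hπs]
    have hQval : ∀ q : Z × X,
        Q q = (PYgXZ (q.2, q.1)).bind fun y' => (PZgXY (q.2, y')).bind ⇑W := by
      intro q
      rw [hQ, hΛdef, Kernel.comap_apply, hKstar]
      have hmeas1 : Measurable (fun y' : Y =>
          (PZgXY (q.2, y')).bind fun z' => (PXgZ z').map fun x' => (y', z', x')) := by
        rw [hstarfun q.2]; exact Kernel.measurable _
      rw [map_bind' _ hmeas1 hπs]
      refine congrArg _ (funext fun y' => ?_)
      have hΦy : Measurable (fun z' : Z => Φ (y', z')) :=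
        Φ.measurable.comp measurable_prodMk_left
      rw [show (fun z' => (PXgZ z').map fun x' => (y', z', x')) = fun z' => Φ (y', z') from
        funext fun z' => (hΦ (y', z')).symm,
        map_bind' _ hΦy hπs]
      refine congrArg _ (funext fun z' => ?_)
      rw [hΦ (y', z'), Measure.map_map hπs (htrip y' z'), hWdef, Jk_apply]
      rfl
    have hQW : ∀ b : Z, (W b).bind ⇑Q = (KZ b).bind ⇑W := by
      intro b
      conv_lhs => rw [hWdef, Jk_apply]
      rw [bind_map' _ measurable_prodMk_left Q.measurable]
      have h1 : ∀ x', Q (b, x') = (H' (b, x')).bind ⇑W := by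
        intro x'
        rw [hQval (b, x'), hH' (b, x')]
        have hPZx : Measurable (fun w : Y => PZgXY (x', w)) :=
          PZgXY.measurable.comp measurable_prodMk_left
        exact (Measure.bind_bind hPZx.aemeasurable W.measurable.aemeasurable).symm
      have hH'b : Measurable (fun x' : X => H' (b, x')) :=
        H'.measurable.comp measurable_prodMk_left
      rw [show (fun x' => Q (b, x')) = fun x' => (H' (b, x')).bind ⇑W from funext h1,
        ← Measure.bind_bind hH'b.aemeasurable W.measurable.aemeasurable, hXH b]
    have hΛH : ∀ q : Z × X, (Λ q).bind ⇑H = (H' q).bind ⇑KZ := by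
      intro q
      rw [hΛdef, Kernel.comap_apply, hKstar]
      have hmeas1 : Measurable (fun y' : Y =>
          (PZgXY (q.2, y')).bind fun z' => (PXgZ z').map fun x' => (y', z', x')) := by
        rw [hstarfun q.2]; exact Kernel.measurable _
      have hPZq : Measurable (fun w : Y => PZgXY (q.2, w)) :=
        PZgXY.measurable.comp measurable_prodMk_left
      rw [Measure.bind_bind hmeas1.aemeasurable H.measurable.aemeasurable, hH' q,
        Measure.bind_bind hPZq.aemeasurable KZ.measurable.aemeasurable]
      refine congrArg _ (funext fun y' => ?_)
      have hΦy : Measurable (fun z' : Z => Φ (y', z')) :=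
        Φ.measurable.comp measurable_prodMk_left
      rw [show (fun z' => (PXgZ z').map fun x' => (y', z', x')) = fun z' => Φ (y', z') from
        funext fun z' => (hΦ (y', z')).symm,
        Measure.bind_bind hΦy.aemeasurable H.measurable.aemeasurable]
      refine congrArg _ (funext fun z' => ?_)
      rw [hΦ (y', z'), bind_map' _ (htrip y' z') H.measurable,
        show (fun x' => H (y', z', x')) = fun x' => H' (z', x') from
          funext fun x' => hHap (y', z', x'), hXH z']
    set ν : Measure (Y × Z × X) := (PXgZ z).map (fun x' => (y₀, z, x')) with hνdef
    haveI : IsProbabilityMeasure ν := Measure.isProbabilityMeasure_map hνf.aemeasurable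
    have hνπ : ν.map (fun p : Y × Z × X => (p.2.1, p.2.2)) = W z := by
      rw [hνdef, Measure.map_map hπs hνf, hWdef, Jk_apply]
      rfl
    have claimB : ∀ m' : ℕ, (ν.bind ⇑(kpow Kstar m')).bind ⇑H = kpow KZ (m' + 1) z := by
      intro m'
      cases m' with
      | zero =>
          rw [kpow_zero_bind, hνdef, bind_map' _ hνf H.measurable,
            show (fun x' => H (y₀, z, x')) = fun x' => H' (z, x') from
              funext fun x' => hHap (y₀, z, x'), hXH z, kpow_succ, kpow_zero_bind]
      | succ m' =>
          have hdein := deinit Kstar Q Λ (fun p : Y × Z × X => (p.2.1, p.2.2)) hπs hΛ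
            (fun q => (hQ q).symm) m'
          have hg : Measurable (fun q : Z × X => (kpow Q m' q).bind ⇑Λ) :=
            (Measure.measurable_bind' Λ.measurable).comp (kpow Q m').measurable
          have step1 : ν.bind ⇑(kpow Kstar (m' + 1)) = ((kpow KZ m' z).bind ⇑W).bind ⇑Λ := by
            calc ν.bind ⇑(kpow Kstar (m' + 1))
                = ν.bind (fun p => (kpow Q m' ((fun p : Y × Z × X => (p.2.1, p.2.2)) p)).bind ⇑Λ)
                  := by rw [show ⇑(kpow Kstar (m' + 1))
                      = fun p => (kpow Q m' ((fun p : Y × Z × X => (p.2.1, p.2.2)) p)).bind ⇑Λ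
                      from funext hdein]
              _ = (ν.map (fun p : Y × Z × X => (p.2.1, p.2.2))).bind
                    (fun q => (kpow Q m' q).bind ⇑Λ) := (bind_map' _ hπs hg).symm
              _ = (W z).bind (fun q => (kpow Q m' q).bind ⇑Λ) := by rw [hνπ]
              _ = ((W z).bind ⇑(kpow Q m')).bind ⇑Λ :=
                  (Measure.bind_bind (kpow Q m').measurable.aemeasurable Λ.measurable.aemeasurable).symm
              _ = ((kpow KZ m' z).bind ⇑W).bind ⇑Λ := by rw [intertwine W Q KZ hQW m' z]
          have hmeas2 : Measurable (fun q : Z × X => (H' q).bind ⇑KZ) :=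
            (Measure.measurable_bind' KZ.measurable).comp H'.measurable
          calc (ν.bind ⇑(kpow Kstar (m' + 1))).bind ⇑H
              = (((kpow KZ m' z).bind ⇑W).bind ⇑Λ).bind ⇑H := by rw [step1]
            _ = ((kpow KZ m' z).bind ⇑W).bind (fun q => (Λ q).bind ⇑H) :=
                Measure.bind_bind Λ.measurable.aemeasurable H.measurable.aemeasurable
            _ = ((kpow KZ m' z).bind ⇑W).bind (fun q => (H' q).bind ⇑KZ) := by
                rw [show (fun q : Z × X => (Λ q).bind ⇑H) = fun q => (H' q).bind ⇑KZ from
                  funext hΛH]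
            _ = (kpow KZ m' z).bind (fun b => (W b).bind (fun q => (H' q).bind ⇑KZ)) :=
                Measure.bind_bind W.measurable.aemeasurable hmeas2.aemeasurable
            _ = (kpow KZ m' z).bind (fun b => ((W b).bind ⇑H').bind ⇑KZ) := by
                refine congrArg _ (funext fun b => ?_)
                exact (Measure.bind_bind H'.measurable.aemeasurable KZ.measurable.aemeasurable).symm
            _ = (kpow KZ m' z).bind (fun b => (KZ b).bind ⇑KZ) := by
                refine congrArg _ (funext fun b => ?_)
                rw [hWH b]
            _ = ((kpow KZ m' z).bind ⇑KZ).bind ⇑KZ :=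
                (Measure.bind_bind KZ.measurable.aemeasurable KZ.measurable.aemeasurable).symm
            _ = (kpow KZ (m' + 1) z).bind ⇑KZ := by rw [← kpow_succ']
            _ = kpow KZ (m' + 1 + 1) z := by rw [← kpow_succ']
    have hPiStar2 : PiStar = (Pi.map fun p : X × Y × Z => (p.2.1, p.2.2)).bind ⇑Φ := by
      rw [hPiStar]
      exact congrArg _ (funext fun q => (hΦ q).symm)
    haveI : IsProbabilityMeasure PiStar := by
      rw [hPiStar2]
      exact isProbabilityMeasure_bind Φ.measurable fun q => inferInstance
    have claimC : PiStar.bind ⇑H = Pi.map fun p : X × Y × Z => p.2.2 := by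
      rw [hPiStar2, Measure.bind_bind Φ.measurable.aemeasurable H.measurable.aemeasurable]
      have hfun : (fun q : Y × Z => (Φ q).bind ⇑H) = fun q => KZ q.2 := by
        funext q
        rw [hΦ q, bind_map' _ (htrip q.1 q.2) H.measurable,
          show (fun x_ => H (q.1, q.2, x_)) = fun x_ => H' (q.2, x_) from
            funext fun x_ => hHap (q.1, q.2, x_), hXH q.2]
      rw [hfun, show (fun q : Y × Z => KZ q.2) = fun q : Y × Z => KZ (Prod.snd q) from rfl,
        ← bind_map' _ measurable_snd KZ.measurable,
        Measure.map_map measurable_snd hπyz,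
        show (Prod.snd ∘ fun p : X × Y × Z => (p.2.1, p.2.2)) = fun p : X × Y × Z => p.2.2
          from rfl, hinv]
    haveI : IsProbabilityMeasure (ν.bind ⇑(kpow Kstar m)) :=
      isProbabilityMeasure_bind (kpow Kstar m).measurable fun _ => inferInstance
    rw [← claimB m, ← claimC]
    exact tvDist_bind_le (ν.bind ⇑(kpow Kstar m)) PiStar H
end

section
/- For every (y,z,x) and n ≥ 1, ‖K*^n((y,z,x),·) − Π*(·)‖ ≤ ‖ν_{(x,z)} K_{XY}^{n−1}(·) − Π_{XY}(·)‖ ≤ ‖ν_{(x,z)} K†^{(n−1)}(·) − Π(·)‖, where ν_{(x,z)} places X = x a.s. and Y ~ Π_{Y|XZ}(·|x,z). -/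
open MeasureTheory ProbabilityTheory
open scoped ENNReal

section Helpers

variable {α β γ : Type*} [MeasurableSpace α] [MeasurableSpace β] [MeasurableSpace γ]

lemma map_bind_aux (μ : Measure α) {f : α → Measure β} {g : β → γ}
    (hf : Measurable f) (hg : Measurable g) :
    (μ.bind f).map g = μ.bind fun a => (f a).map g := by
  have hd : Measurable fun x => Measure.dirac (g x) := Measure.measurable_dirac.comp hg
  rw [← Measure.bind_dirac_eq_map _ hg, Measure.bind_bind hf.aemeasurable hd.aemeasurable]
  simp_rw [Measure.bind_dirac_eq_map _ hg]

lemma bind_map_aux (μ : Measure α) {f : β → Measure γ} {g : α → β}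
    (hf : Measurable f) (hg : Measurable g) :
    (μ.map g).bind f = μ.bind fun a => f (g a) := by
  have hd : Measurable fun x => Measure.dirac (g x) := Measure.measurable_dirac.comp hg
  rw [← Measure.bind_dirac_eq_map _ hg, Measure.bind_bind hd.aemeasurable hf.aemeasurable]
  simp_rw [Measure.dirac_bind hf]

lemma isProbabilityMeasure_bind_aux (μ : Measure α) [IsProbabilityMeasure μ]
    {f : α → Measure β} (hf : Measurable f) (h : ∀ a, IsProbabilityMeasure (f a)) :
    IsProbabilityMeasure (μ.bind f) := by
  constructor
  rw [Measure.bind_apply MeasurableSet.univ hf.aemeasurable]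
  have : ∀ a, f a Set.univ = 1 := fun a => (h a).measure_univ
  simp [this]

instance kpow_markov {E : Type*} [MeasurableSpace E] (P : Kernel E E) [IsMarkovKernel P]
    (n : ℕ) : IsMarkovKernel (kpow P n) := by
  induction n with
  | zero => rw [kpow]; infer_instance
  | succ n ih => rw [kpow]; infer_instance

lemma kpow_succ_apply {E : Type*} [MeasurableSpace E] (P : Kernel E E) (n : ℕ) (a : E) :
    kpow P (n + 1) a = (P a).bind (kpow P n) := by
  show ((kpow P n) ∘ₖ P) a = _
  rw [Kernel.comp_apply]

lemma kpow_zero_apply {E : Type*} [MeasurableSpace E] (P : Kernel E E) (a : E) :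
    kpow P 0 a = Measure.dirac a := by
  show Kernel.id a = _
  rw [Kernel.id_apply]

lemma bddAbove_tv (μ ν : Measure α) [IsProbabilityMeasure μ] [IsProbabilityMeasure ν] :
    BddAbove (Set.range fun A : {A : Set α // MeasurableSet A} =>
      |(μ A.1).toReal - (ν A.1).toReal|) := by
  refine ⟨1, ?_⟩
  rintro r ⟨A, rfl⟩
  have h1 : (μ A.1).toReal ≤ 1 := by
    have := prob_le_one (μ := μ) (s := A.1)
    simpa using ENNReal.toReal_mono ENNReal.one_ne_top this
  have h2 : (ν A.1).toReal ≤ 1 := by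
    have := prob_le_one (μ := ν) (s := A.1)
    simpa using ENNReal.toReal_mono ENNReal.one_ne_top this
  have h3 : (0:ℝ) ≤ (μ A.1).toReal := ENNReal.toReal_nonneg
  have h4 : (0:ℝ) ≤ (ν A.1).toReal := ENNReal.toReal_nonneg
  rw [abs_sub_le_iff]
  constructor <;> linarith

instance : Nonempty {A : Set α // MeasurableSet A} := ⟨⟨∅, MeasurableSet.empty⟩⟩

lemma abs_diff_le_tvDist (μ ν : Measure α) [IsProbabilityMeasure μ] [IsProbabilityMeasure ν]
    {A : Set α} (hA : MeasurableSet A) :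
    |(μ A).toReal - (ν A).toReal| ≤ tvDist μ ν :=
  le_ciSup (bddAbove_tv μ ν) (⟨A, hA⟩ : {A : Set α // MeasurableSet A})

lemma tvDist_map_le (μ ν : Measure α) [IsProbabilityMeasure μ] [IsProbabilityMeasure ν]
    {g : α → β} (hg : Measurable g) :
    tvDist (μ.map g) (ν.map g) ≤ tvDist μ ν := by
  apply ciSup_le
  rintro ⟨A, hA⟩
  rw [Measure.map_apply hg hA, Measure.map_apply hg hA]
  exact abs_diff_le_tvDist μ ν (hg hA)

lemma lint_key {μ ν : Measure α} [IsProbabilityMeasure μ] [IsProbabilityMeasure ν]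
    {f : α → ℝ≥0∞} (hf : Measurable f) (hf1 : ∀ a, f a ≤ 1) {s : Set α}
    (hs : MeasurableSet s) (h1 : ν.restrict s ≤ μ.restrict s)
    (h2 : μ.restrict sᶜ ≤ ν.restrict sᶜ) :
    ∫⁻ a, f a ∂μ + ν s ≤ ∫⁻ a, f a ∂ν + μ s := by
  have hsplit : ∀ ρ : Measure α, ∫⁻ a, f a ∂ρ = ∫⁻ a in s, f a ∂ρ + ∫⁻ a in sᶜ, f a ∂ρ :=
    fun ρ => (lintegral_add_compl f hs).symm
  have hsplit2 : ∀ ρ : Measure α, [IsProbabilityMeasure ρ] →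
      ρ s = ∫⁻ a in s, f a ∂ρ + ∫⁻ a in s, (1 - f a) ∂ρ := by
    intro ρ _
    rw [← lintegral_add_left hf]
    have : ∀ a, f a + (1 - f a) = 1 := fun a => add_tsub_cancel_of_le (hf1 a)
    calc ρ s = ∫⁻ _ in s, 1 ∂ρ := (setLIntegral_one s).symm
      _ = ∫⁻ a in s, (f a + (1 - f a)) ∂ρ := by
          apply lintegral_congr; intro a; rw [this a]
      _ = _ := rfl
  have key1 : ∫⁻ a in sᶜ, f a ∂μ ≤ ∫⁻ a in sᶜ, f a ∂ν := lintegral_mono' h2 le_rfl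
  have key2 : ∫⁻ a in s, (1 - f a) ∂ν ≤ ∫⁻ a in s, (1 - f a) ∂μ := lintegral_mono' h1 le_rfl
  calc ∫⁻ a, f a ∂μ + ν s
      = (∫⁻ a in s, f a ∂μ + ∫⁻ a in s, f a ∂ν)
        + (∫⁻ a in sᶜ, f a ∂μ + ∫⁻ a in s, (1 - f a) ∂ν) := by
        rw [hsplit μ, hsplit2 ν]; abel
    _ ≤ (∫⁻ a in s, f a ∂μ + ∫⁻ a in s, f a ∂ν)
        + (∫⁻ a in sᶜ, f a ∂ν + ∫⁻ a in s, (1 - f a) ∂μ) := by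
        exact add_le_add le_rfl (add_le_add key1 key2)
    _ = ∫⁻ a, f a ∂ν + μ s := by
        rw [hsplit ν, hsplit2 μ]; abel

lemma restrict_le_of_forall {μ ν : Measure α} {s : Set α} (hs : MeasurableSet s)
    (h : ∀ t, MeasurableSet t → t ⊆ s → μ t ≤ ν t) : μ.restrict s ≤ ν.restrict s := by
  rw [Measure.le_iff]
  intro t ht
  rw [Measure.restrict_apply ht, Measure.restrict_apply ht]
  exact h _ (ht.inter hs) Set.inter_subset_right

lemma tvDist_bind_le (μ ν : Measure α) [IsProbabilityMeasure μ] [IsProbabilityMeasure ν]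
    (κ : Kernel α β) [IsMarkovKernel κ] :
    tvDist (μ.bind κ) (ν.bind κ) ≤ tvDist μ ν := by
  obtain ⟨s, hs, h1, h2⟩ := hahn_decomposition (μ := μ) (ν := ν)
  have h1' : ν.restrict s ≤ μ.restrict s := restrict_le_of_forall hs h1
  have h2' : μ.restrict sᶜ ≤ ν.restrict sᶜ := restrict_le_of_forall hs.compl h2
  apply ciSup_le
  rintro ⟨A, hA⟩
  rw [Measure.bind_apply hA κ.measurable.aemeasurable, Measure.bind_apply hA κ.measurable.aemeasurable]
  set f : α → ℝ≥0∞ := fun a => κ a A with hfdef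
  have hf : Measurable f := κ.measurable_coe hA
  have hf1 : ∀ a, f a ≤ 1 := fun a => prob_le_one
  have k1 : ∫⁻ a, f a ∂μ + ν s ≤ ∫⁻ a, f a ∂ν + μ s := lint_key hf hf1 hs h1' h2'
  have k2 : ∫⁻ a, f a ∂ν + μ sᶜ ≤ ∫⁻ a, f a ∂μ + ν sᶜ := by
    refine lint_key hf hf1 hs.compl h2' ?_
    rw [compl_compl]; exact h1'
  have hint : ∀ ρ : Measure α, [IsProbabilityMeasure ρ] → ∫⁻ a, f a ∂ρ ≠ ∞ := by
    intro ρ _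
    have : ∫⁻ a, f a ∂ρ ≤ 1 := by
      calc ∫⁻ a, f a ∂ρ ≤ ∫⁻ _, 1 ∂ρ := lintegral_mono hf1
        _ = 1 := by simp
    exact ne_top_of_le_ne_top ENNReal.one_ne_top this
  have hμs := measure_ne_top μ s
  have hνs := measure_ne_top ν s
  have hμsc := measure_ne_top μ sᶜ
  have hνsc := measure_ne_top ν sᶜ
  have r1 : (∫⁻ a, f a ∂μ).toReal + (ν s).toReal ≤ (∫⁻ a, f a ∂ν).toReal + (μ s).toReal := by
    have := ENNReal.toReal_mono (by
      exact ENNReal.add_ne_top.2 ⟨hint ν, hμs⟩) k1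
    rwa [ENNReal.toReal_add (hint μ) hνs, ENNReal.toReal_add (hint ν) hμs] at this
  have r2 : (∫⁻ a, f a ∂ν).toReal + (μ sᶜ).toReal ≤ (∫⁻ a, f a ∂μ).toReal + (ν sᶜ).toReal := by
    have := ENNReal.toReal_mono (by
      exact ENNReal.add_ne_top.2 ⟨hint μ, hνsc⟩) k2
    rwa [ENNReal.toReal_add (hint ν) hμsc, ENNReal.toReal_add (hint μ) hνsc] at this
  have b1 : |(μ s).toReal - (ν s).toReal| ≤ tvDist μ ν := abs_diff_le_tvDist μ ν hs
  have b2 : |(μ sᶜ).toReal - (ν sᶜ).toReal| ≤ tvDist μ ν := abs_diff_le_tvDist μ ν hs.compl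
  rw [abs_sub_le_iff]
  constructor
  · have := abs_le.1 b1
    linarith [this.1, this.2]
  · have := abs_le.1 b2
    linarith [(abs_le.1 b2).1, (abs_le.1 b2).2]

lemma idprod_apply (κ : Kernel α β) [IsSFiniteKernel κ] (a : α) :
    (Kernel.id ×ₖ κ) a = (κ a).map (Prod.mk a) := by
  rw [Kernel.prod_apply, Kernel.id_apply, Measure.dirac_prod]

lemma measurable_pairMap (κ : Kernel α β) [IsSFiniteKernel κ] {g : α × β → γ}
    (hg : Measurable g) :
    Measurable (fun a => (κ a).map (fun b => g (a, b))) := by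
  have : (fun a => (κ a).map (fun b => g (a, b)))
      = fun a => (Kernel.map (Kernel.id ×ₖ κ) g) a := by
    funext a
    rw [Kernel.map_apply _ hg, idprod_apply, Measure.map_map hg measurable_prodMk_left]
    rfl
  rw [this]
  exact (Kernel.map (Kernel.id ×ₖ κ) g).measurable

lemma compProd_eq_bind (μ : Measure α) [SFinite μ] (κ : Kernel α β) [IsSFiniteKernel κ] :
    μ ⊗ₘ κ = μ.bind fun a => (κ a).map (Prod.mk a) := by
  have hm : Measurable fun a => (κ a).map (Prod.mk a) := by
    have := measurable_pairMap κ (g := fun p : α × β => p) measurable_id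
    simpa using this
  ext A hA
  rw [Measure.compProd_apply hA, Measure.bind_apply hA hm.aemeasurable]
  congr 1
  funext a
  rw [Measure.map_apply measurable_prodMk_left hA]

end Helpers

/-- `‖K*^n((y,z,x),·) − Π*‖ ≤ ‖ν_{(x,z)} K_{XY}^{n-1} − Π_{XY}‖
≤ ‖ν_{(x,z)} K†^{(n-1)} − Π‖` for n ≥ 1. -/
theorem Kstar_tv_chain
    {X Y Z : Type*} [MeasurableSpace X] [MeasurableSpace Y] [MeasurableSpace Z]
    (Pi : Measure (X × Y × Z)) [IsProbabilityMeasure Pi]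
    (PXgZ : Kernel Z X) [IsMarkovKernel PXgZ]
    (PYgXZ : Kernel (X × Z) Y) [IsMarkovKernel PYgXZ]
    (PZgXY : Kernel (X × Y) Z) [IsMarkovKernel PZgXY]
    (PXYgZ : Kernel Z (X × Y)) [IsMarkovKernel PXYgZ]
    (hXgZ : Pi.map (fun p : X × Y × Z => (p.2.2, p.1)) = (Pi.map fun p : X × Y × Z => p.2.2) ⊗ₘ PXgZ)
    (hYgXZ : Pi.map (fun p : X × Y × Z => ((p.1, p.2.2), p.2.1)) = (Pi.map fun p : X × Y × Z => (p.1, p.2.2)) ⊗ₘ PYgXZ)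
    (hZgXY : Pi.map (fun p : X × Y × Z => ((p.1, p.2.1), p.2.2)) = (Pi.map fun p : X × Y × Z => (p.1, p.2.1)) ⊗ₘ PZgXY)
    (hXYgZ : Pi.map (fun p : X × Y × Z => (p.2.2, (p.1, p.2.1))) = (Pi.map fun p : X × Y × Z => p.2.2) ⊗ₘ PXYgZ)
    (hseq : ∀ z : Z, PXYgZ z = (PXgZ z).bind fun x => (PYgXZ (x, z)).map fun y => (x, y))
    (KXY : Kernel (X × Y) (X × Y))
    (hKXY : ∀ q : X × Y, KXY q = (PZgXY q).bind fun z => PXYgZ z)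
    (Kd : Kernel (Z × X × Y) (Z × X × Y))
    (hKd : ∀ p : Z × X × Y, Kd p = (PZgXY (p.2.1, p.2.2)).bind fun z' =>
        (PXYgZ z').map fun q => (z', q.1, q.2))
    (Kstar : Kernel (Y × Z × X) (Y × Z × X))
    (hKstar : ∀ p : Y × Z × X, Kstar p =
      (PYgXZ (p.2.2, p.2.1)).bind fun y' =>
        (PZgXY (p.2.2, y')).bind fun z' =>
          (PXgZ z').map fun x' => (y', z', x'))
    (PiStar : Measure (Y × Z × X))
    (hPiStar : PiStar = (Pi.map fun p : X × Y × Z => (p.2.1, p.2.2)).bind fun q =>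
        (PXgZ q.2).map fun x => (q.1, q.2, x))
    :
    ∀ (y : Y) (z : Z) (x : X) (n : ℕ), 1 ≤ n →
      tvDist ((kpow Kstar n) (y, z, x)) PiStar ≤
          tvDist (((PYgXZ (x, z)).map fun y' => (x, y')).bind fun q => (kpow KXY (n - 1)) q)
            (Pi.map fun p : X × Y × Z => (p.1, p.2.1)) ∧
        tvDist (((PYgXZ (x, z)).map fun y' => (x, y')).bind fun q => (kpow KXY (n - 1)) q)
            (Pi.map fun p : X × Y × Z => (p.1, p.2.1)) ≤
          tvDist (((PYgXZ (x, z)).map fun y' => (z, x, y')).bind fun u => (kpow Kd (n - 1)) u)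
            (Pi.map fun p : X × Y × Z => (p.2.2, p.1, p.2.1)) := by
  intro y z x n hn
  obtain ⟨m, rfl⟩ : ∃ m, n = m + 1 := ⟨n - 1, (Nat.succ_pred_eq_of_pos hn).symm⟩
  simp only [Nat.add_sub_cancel]
  -- the kernel F : (X × Y) → (Y × Z × X), q ↦ law of (q.2, z', x') with z' ~ PZgXY q, x' ~ PXgZ z'
  have hgF : Measurable fun qr : (X × Y) × (Z × X) => (qr.1.2, qr.2.1, qr.2.2) := by fun_prop
  set GK : Kernel (X × Y) (Z × X) := (Kernel.id ×ₖ PXgZ) ∘ₖ PZgXY with hGK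
  set F : Kernel (X × Y) (Y × Z × X) :=
    Kernel.map (Kernel.id ×ₖ GK) (fun qr => (qr.1.2, qr.2.1, qr.2.2)) with hFdef
  haveI : IsMarkovKernel F := Kernel.IsMarkovKernel.map _ hgF
  have hF : ∀ q : X × Y, F q = (PZgXY q).bind fun z' =>
      (PXgZ z').map fun x'' => (q.2, z', x'') := by
    intro q
    rw [hFdef, Kernel.map_apply _ hgF, idprod_apply,
      Measure.map_map hgF measurable_prodMk_left, hGK, Kernel.comp_apply,
      map_bind_aux _ (Kernel.id ×ₖ PXgZ).measurable (hgF.comp measurable_prodMk_left)]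
    congr 1
    funext z'
    rw [idprod_apply, Measure.map_map (hgF.comp measurable_prodMk_left) measurable_prodMk_left]
    rfl
  have fact1 : ∀ p : Y × Z × X,
      Kstar p = ((PYgXZ (p.2.2, p.2.1)).map fun y' => (p.2.2, y')).bind F := by
    intro p
    rw [bind_map_aux _ F.measurable measurable_prodMk_left, hKstar]
    congr 1
    funext y'
    rw [hF (p.2.2, y')]
  have measPMK : ∀ z' : Z, Measurable fun x'' : X => (PYgXZ (x'', z')).map fun y => (x'', y) := by
    intro z'
    have h := measurable_pairMap (PYgXZ.comap (fun x : X => (x, z')) measurable_prodMk_right)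
      (g := fun p : X × Y => p) measurable_id
    simp only [Kernel.comap_apply] at h
    exact h
  have fact2 : ∀ q : X × Y, (F q).bind Kstar = (KXY q).bind F := by
    intro q
    rw [hF q]
    have hG : Measurable fun z' => (PXgZ z').map fun x'' => (q.2, z', x'') :=
      measurable_pairMap PXgZ (g := fun r : Z × X => (q.2, r.1, r.2)) (by fun_prop)
    rw [Measure.bind_bind hG.aemeasurable Kstar.measurable.aemeasurable]
    have inner : ∀ z' : Z,
        (((PXgZ z').map fun x'' => ((q.2 : Y), z', x'')).bind Kstar) = (PXYgZ z').bind F := by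
      intro z'
      rw [bind_map_aux _ Kstar.measurable
        (by fun_prop : Measurable fun x'' : X => ((q.2 : Y), z', x'')), hseq z']
      rw [Measure.bind_bind (measPMK z').aemeasurable F.measurable.aemeasurable]
      congr 1
      funext x''
      rw [fact1 (q.2, z', x'')]
    simp only [inner]
    rw [hKXY q]
    have hb := Measure.bind_bind (m := PZgXY q) (f := fun z => PXYgZ z) (g := F)
      PXYgZ.measurable.aemeasurable F.measurable.aemeasurable
    rw [hb]
  have factE : ∀ k : ℕ, ∀ q : X × Y,
      (F q).bind (kpow Kstar k) = (kpow KXY k q).bind F := by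
    intro k
    induction k with
    | zero =>
      intro q
      have h0 : ⇑(kpow Kstar 0) = fun a : Y × Z × X => Measure.dirac a :=
        funext (kpow_zero_apply _)
      rw [h0, Measure.bind_dirac, kpow_zero_apply, Measure.dirac_bind F.measurable]
    | succ k ih =>
      intro q
      have hl : ⇑(kpow Kstar (k + 1)) = fun a => (Kstar a).bind (kpow Kstar k) :=
        funext (kpow_succ_apply _ _)
      rw [hl]
      have hb := Measure.bind_bind (m := F q) (f := (Kstar : _ → Measure _))
        (g := (kpow Kstar k : _ → Measure _)) Kstar.measurable.aemeasurable (kpow Kstar k).measurable.aemeasurable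
      rw [← hb, fact2 q,
        Measure.bind_bind F.measurable.aemeasurable (kpow Kstar k).measurable.aemeasurable]
      have he : (fun q' => (F q').bind ⇑(kpow Kstar k)) = fun q' => (kpow KXY k q').bind ⇑F :=
        funext ih
      rw [he]
      have hb2 := Measure.bind_bind (m := KXY q) (f := (kpow KXY k : _ → Measure _))
        (g := (F : _ → Measure _)) (kpow KXY k).measurable.aemeasurable F.measurable.aemeasurable
      rw [← hb2, ← kpow_succ_apply]
  have main1 : kpow Kstar (m + 1) (y, z, x)
      = (((PYgXZ (x, z)).map fun y' => (x, y')).bind (kpow KXY m)).bind F := by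
    rw [kpow_succ_apply, fact1 (y, z, x),
      Measure.bind_bind F.measurable.aemeasurable (kpow Kstar m).measurable.aemeasurable]
    have he : (fun q => (F q).bind ⇑(kpow Kstar m)) = fun q => (kpow KXY m q).bind ⇑F :=
      funext (factE m)
    rw [he]
    have hb := Measure.bind_bind (m := (PYgXZ ((y, z, x).2.2, (y, z, x).2.1)).map
        fun y' => ((y, z, x).2.2, y'))
      (f := (kpow KXY m : _ → Measure _)) (g := (F : _ → Measure _))
      (kpow KXY m).measurable.aemeasurable F.measurable.aemeasurable
    rw [← hb]
  have hKdInner : Measurable fun z' : Z => (PXYgZ z').map fun q : X × Y => (z', q.1, q.2) :=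
    measurable_pairMap PXYgZ (g := fun s : Z × (X × Y) => (s.1, s.2.1, s.2.2)) (by fun_prop)
  haveI hMKXY : IsMarkovKernel KXY := by
    constructor
    intro q
    rw [hKXY q]
    exact isProbabilityMeasure_bind_aux _ PXYgZ.measurable fun a => inferInstance
  haveI hMKd : IsMarkovKernel Kd := by
    constructor
    intro p
    rw [hKd p]
    exact isProbabilityMeasure_bind_aux _ hKdInner fun a =>
      Measure.isProbabilityMeasure_map (by fun_prop)
  -- probability instances
  haveI hPiXY : IsProbabilityMeasure (Pi.map fun p : X × Y × Z => (p.1, p.2.1)) :=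
    Measure.isProbabilityMeasure_map (by fun_prop)
  haveI hPiZXY : IsProbabilityMeasure (Pi.map fun p : X × Y × Z => (p.2.2, p.1, p.2.1)) :=
    Measure.isProbabilityMeasure_map (by fun_prop)
  haveI hnu0 : IsProbabilityMeasure ((PYgXZ (x, z)).map fun y' => (x, y')) :=
    Measure.isProbabilityMeasure_map (by fun_prop)
  haveI hnu1 : IsProbabilityMeasure ((PYgXZ (x, z)).map fun y' => (z, x, y')) :=
    Measure.isProbabilityMeasure_map (by fun_prop)
  haveI hM0 : IsProbabilityMeasure
      ((((PYgXZ (x, z)).map fun y' => (x, y')).bind (kpow KXY m) : Measure (X × Y))) :=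
    isProbabilityMeasure_bind_aux _ (kpow KXY m).measurable fun a => inferInstance
  haveI hM1 : IsProbabilityMeasure
      ((((PYgXZ (x, z)).map fun y' => (z, x, y')).bind (kpow Kd m) : Measure (Z × X × Y))) :=
    isProbabilityMeasure_bind_aux _ (kpow Kd m).measurable fun a => inferInstance
  -- PiStar = Pi_{XY}.bind F
  have hW : Measurable fun r : (X × Y) × Z => (PXgZ r.2).map fun x'' => (r.1.2, r.2, x'') := by
    have h := measurable_pairMap (PXgZ.comap (Prod.snd : (X × Y) × Z → Z) measurable_snd)
      (g := fun s : ((X × Y) × Z) × X => (s.1.1.2, s.1.2, s.2)) (by fun_prop)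
    simp only [Kernel.comap_apply] at h
    exact h
  have hZXYmeas : Measurable fun q : X × Y => (PZgXY q).map (Prod.mk q) := by
    have h := measurable_pairMap PZgXY (g := fun p : (X × Y) × Z => p) measurable_id
    exact h
  have hq2meas : Measurable fun q : Y × Z => (PXgZ q.2).map fun x' => (q.1, q.2, x') := by
    have h := measurable_pairMap (PXgZ.comap (Prod.snd : Y × Z → Z) measurable_snd)
      (g := fun s : (Y × Z) × X => (s.1.1, s.1.2, s.2)) (by fun_prop)
    simp only [Kernel.comap_apply] at h
    exact h
  have hPiStar2 : PiStar = (Pi.map fun p : X × Y × Z => (p.1, p.2.1)).bind F := by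
    have e1 : (Pi.map fun p : X × Y × Z => (p.1, p.2.1)).bind ⇑F
        = (Pi.map fun p : X × Y × Z => (p.1, p.2.1)).bind
          (fun q => ((PZgXY q).map (Prod.mk q)).bind
            (fun r => (PXgZ r.2).map fun x'' => (r.1.2, r.2, x''))) := by
      congr 1
      funext q
      rw [hF q, bind_map_aux _ hW measurable_prodMk_left]
    rw [e1]
    have hb := Measure.bind_bind (m := Pi.map fun p : X × Y × Z => (p.1, p.2.1))
      (f := fun q : X × Y => (PZgXY q).map (Prod.mk q))
      (g := fun r : (X × Y) × Z => (PXgZ r.2).map fun x'' => (r.1.2, r.2, x''))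
      hZXYmeas.aemeasurable hW.aemeasurable
    rw [← hb, ← compProd_eq_bind, ← hZgXY,
      bind_map_aux _ hW (by fun_prop : Measurable fun p : X × Y × Z => ((p.1, p.2.1), p.2.2)),
      hPiStar,
      bind_map_aux _ hq2meas (by fun_prop : Measurable fun p : X × Y × Z => (p.2.1, p.2.2))]
  constructor
  · rw [main1, hPiStar2]
    exact tvDist_bind_le _ _ F
  · -- second inequality
    have factC : ∀ k : ℕ, ∀ p : Z × X × Y, (kpow Kd k p).map Prod.snd = kpow KXY k p.2 := by
      intro k
      induction k with
      | zero =>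
        intro p
        rw [kpow_zero_apply, kpow_zero_apply, Measure.map_dirac' measurable_snd]
      | succ k ih =>
        intro p
        rw [kpow_succ_apply, kpow_succ_apply,
          map_bind_aux _ (kpow Kd k).measurable measurable_snd]
        have he : (fun u : Z × X × Y => (kpow Kd k u).map Prod.snd) =
            fun u => kpow KXY k u.2 := funext ih
        rw [he]
        have hb := bind_map_aux (μ := Kd p) (f := (kpow KXY k : _ → Measure _))
          (g := (Prod.snd : Z × X × Y → X × Y)) (kpow KXY k).measurable measurable_snd
        rw [← hb]
        congr 1
        -- one step: (Kd p).map snd = KXY p.2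
        rw [hKd p, map_bind_aux _ hKdInner measurable_snd, hKXY]
        congr 1
        funext z'
        rw [Measure.map_map measurable_snd
          (by fun_prop : Measurable fun q : X × Y => ((z' : Z), q.1, q.2))]
        have hc : (Prod.snd ∘ fun q : X × Y => ((z' : Z), q.1, q.2)) = id := rfl
        rw [hc, Measure.map_id]
    have main2 : (((PYgXZ (x, z)).map fun y' => (z, x, y')).bind (kpow Kd m)).map Prod.snd
        = ((PYgXZ (x, z)).map fun y' => (x, y')).bind (kpow KXY m) := by
      rw [map_bind_aux _ (kpow Kd m).measurable measurable_snd]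
      have he : (fun u : Z × X × Y => (kpow Kd m u).map Prod.snd) =
          fun u => kpow KXY m u.2 := funext (factC m)
      rw [he]
      have hb := bind_map_aux (μ := (PYgXZ (x, z)).map fun y' => (z, x, y'))
        (f := (kpow KXY m : _ → Measure _)) (g := (Prod.snd : Z × X × Y → X × Y))
        (kpow KXY m).measurable measurable_snd
      rw [← hb, Measure.map_map measurable_snd
        (by fun_prop : Measurable fun y' : Y => ((z, x, y') : Z × X × Y))]
      rfl
    have mapPi : (Pi.map fun p : X × Y × Z => (p.2.2, p.1, p.2.1)).map Prod.snd
        = Pi.map fun p : X × Y × Z => (p.1, p.2.1) := by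
      rw [Measure.map_map measurable_snd (by fun_prop)]
      rfl
    rw [← main2, ← mapPi]
    exact tvDist_map_le _ _ measurable_snd
end

section
/- The invariant distribution Π* of the out-of-order block Gibbs chain admits the representation Π*(dy',dz',dx') = ∫_X Π_{X|Z}(dx'|z') Π_{Z|XY}(dz'|x'',y') Π_{XY}(dx'',dy'). -/
open MeasureTheory ProbabilityTheory

lemma measurable_map_kernel {A B C : Type*} [MeasurableSpace A] [MeasurableSpace B]
    [MeasurableSpace C] (κ : Kernel A B) [IsSFiniteKernel κ] {g : A × B → C}
    (hg : Measurable g) : Measurable fun a => (κ a).map (fun b => g (a, b)) := by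
  apply Measure.measurable_of_measurable_coe
  intro s hs
  have : ∀ a, ((κ a).map (fun b => g (a, b))) s = κ a (Prod.mk a ⁻¹' (g ⁻¹' s)) := fun a =>
    Measure.map_apply (hg.comp measurable_prodMk_left) hs
  simp_rw [this]
  exact Kernel.measurable_kernel_prodMk_left (hg hs)

lemma measurable_bind_kernel {A B C : Type*} [MeasurableSpace A] [MeasurableSpace B]
    [MeasurableSpace C] (κ : Kernel A B) [IsSFiniteKernel κ] {f : A × B → Measure C}
    (hf : Measurable f) : Measurable fun a => (κ a).bind (fun b => f (a, b)) := by
  apply Measure.measurable_of_measurable_coe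
  intro s hs
  have : ∀ a, (κ a).bind (fun b => f (a, b)) s = ∫⁻ b, f (a, b) s ∂(κ a) := fun a =>
    Measure.bind_apply hs (hf.comp measurable_prodMk_left).aemeasurable
  simp_rw [this]
  exact Measurable.lintegral_kernel_prod_right ((Measure.measurable_coe hs).comp hf)

/-- Π*(dy',dz',dx') = ∫_X Π_{X|Z}(dx'|z') Π_{Z|XY}(dz'|x'',y') Π_{XY}(dx'',dy'). -/
theorem PiStar_rep
    {X Y Z : Type*} [MeasurableSpace X] [MeasurableSpace Y] [MeasurableSpace Z]
    (Pi : Measure (X × Y × Z)) [IsProbabilityMeasure Pi]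
    (PXgZ : Kernel Z X) [IsMarkovKernel PXgZ]
    (PYgXZ : Kernel (X × Z) Y) [IsMarkovKernel PYgXZ]
    (PZgXY : Kernel (X × Y) Z) [IsMarkovKernel PZgXY]
    (hXgZ : Pi.map (fun p : X × Y × Z => (p.2.2, p.1)) = (Pi.map fun p : X × Y × Z => p.2.2) ⊗ₘ PXgZ)
    (hYgXZ : Pi.map (fun p : X × Y × Z => ((p.1, p.2.2), p.2.1)) = (Pi.map fun p : X × Y × Z => (p.1, p.2.2)) ⊗ₘ PYgXZ)
    (hZgXY : Pi.map (fun p : X × Y × Z => ((p.1, p.2.1), p.2.2)) = (Pi.map fun p : X × Y × Z => (p.1, p.2.1)) ⊗ₘ PZgXY)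
    (PiStar : Measure (Y × Z × X))
    (hPiStar : PiStar = (Pi.map fun p : X × Y × Z => (p.2.1, p.2.2)).bind fun q =>
        (PXgZ q.2).map fun x => (q.1, q.2, x))
    :
    PiStar = (Pi.map fun p : X × Y × Z => (p.1, p.2.1)).bind fun q =>
      (PZgXY q).bind fun z' => (PXgZ z').map fun x' => (q.2, z', x') := by
  subst hPiStar
  have hm2 : Measurable (fun p : X × Y × Z => ((p.1, p.2.1), p.2.2)) := by fun_prop
  have hm3 : Measurable (fun p : (X × Y) × Z => (p.1.2, p.2)) := by fun_prop
  have hmXY : Measurable (fun p : X × Y × Z => (p.1, p.2.1)) := by fun_prop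
  haveI : IsProbabilityMeasure (Pi.map fun p : X × Y × Z => (p.1, p.2.1)) :=
    Measure.isProbabilityMeasure_map hmXY.aemeasurable
  -- YZ marginal as image of compProd
  have hYZ : (Pi.map fun p : X × Y × Z => (p.2.1, p.2.2)) =
      ((Pi.map fun p : X × Y × Z => (p.1, p.2.1)) ⊗ₘ PZgXY).map (fun p => (p.1.2, p.2)) := by
    rw [← hZgXY, Measure.map_map hm3 hm2]
    rfl
  -- measurability of the two integrand families
  have h1 : Measurable fun q : Y × Z => (PXgZ q.2).map (fun x => (q.1, q.2, x)) := by
    have := measurable_map_kernel (PXgZ.comap (Prod.snd : Y × Z → Z) measurable_snd)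
      (g := fun p : (Y × Z) × X => (p.1.1, p.1.2, p.2)) (by fun_prop)
    simpa [Kernel.comap_apply] using this
  have hF : Measurable fun p : (X × Y) × Z => (PXgZ p.2).map (fun x => (p.1.2, p.2, x)) := by
    have := measurable_map_kernel (PXgZ.comap (Prod.snd : (X × Y) × Z → Z) measurable_snd)
      (g := fun p : ((X × Y) × Z) × X => (p.1.1.2, p.1.2, p.2)) (by fun_prop)
    simpa [Kernel.comap_apply] using this
  have h2 : Measurable fun q : X × Y =>
      (PZgXY q).bind fun z' => (PXgZ z').map fun x' => (q.2, z', x') := by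
    exact measurable_bind_kernel PZgXY (f := fun p : (X × Y) × Z =>
      (PXgZ p.2).map (fun x => (p.1.2, p.2, x))) hF
  ext s hs
  have hc1 : Measurable fun q : Y × Z => ((PXgZ q.2).map (fun x => (q.1, q.2, x))) s :=
    (Measure.measurable_coe hs).comp h1
  have hc2 : Measurable fun p : (X × Y) × Z => ((PXgZ p.2).map (fun x => (p.1.2, p.2, x))) s :=
    (Measure.measurable_coe hs).comp hF
  rw [Measure.bind_apply hs h1.aemeasurable, Measure.bind_apply hs h2.aemeasurable, hYZ,
    lintegral_map hc1 hm3, Measure.lintegral_compProd hc2]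
  congr 1
  ext q
  have hq : Measurable fun z : Z => (PXgZ z).map (fun x => (q.2, z, x)) :=
    hF.comp measurable_prodMk_left
  rw [Measure.bind_apply hs hq.aemeasurable]
end

section
/- The Z-marginal invariant distribution admits the representation Π_Z(dz') = ∫ Π_{Z|XY}(dz'|x',y') Π_{Y|XZ}(dy'|x',z'') Π*(dx',dy'',dz''), where Π*(dx,dy,dz) = Π_{X|Z}(dx|z) Π_{YZ}(dy,dz). -/
open MeasureTheory ProbabilityTheory

set_option maxHeartbeats 1000000 in
/-- Π_Z(dz') = ∫ Π_{Z|XY}(dz'|x',y') Π_{Y|XZ}(dy'|x',z'') Π*(dx',dy'',dz''). -/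
theorem PiZ_rep
    {X Y Z : Type*} [MeasurableSpace X] [MeasurableSpace Y] [MeasurableSpace Z]
    (Pi : Measure (X × Y × Z)) [IsProbabilityMeasure Pi]
    (PXgZ : Kernel Z X) [IsMarkovKernel PXgZ]
    (PYgXZ : Kernel (X × Z) Y) [IsMarkovKernel PYgXZ]
    (PZgXY : Kernel (X × Y) Z) [IsMarkovKernel PZgXY]
    (hXgZ : Pi.map (fun p : X × Y × Z => (p.2.2, p.1)) = (Pi.map fun p : X × Y × Z => p.2.2) ⊗ₘ PXgZ)
    (hYgXZ : Pi.map (fun p : X × Y × Z => ((p.1, p.2.2), p.2.1)) = (Pi.map fun p : X × Y × Z => (p.1, p.2.2)) ⊗ₘ PYgXZ)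
    (hZgXY : Pi.map (fun p : X × Y × Z => ((p.1, p.2.1), p.2.2)) = (Pi.map fun p : X × Y × Z => (p.1, p.2.1)) ⊗ₘ PZgXY)
    (PiStar : Measure (Y × Z × X))
    (hPiStar : PiStar = (Pi.map fun p : X × Y × Z => (p.2.1, p.2.2)).bind fun q =>
        (PXgZ q.2).map fun x => (q.1, q.2, x))
    :
    (Pi.map fun p : X × Y × Z => p.2.2) =
      PiStar.bind fun p => (PYgXZ (p.2.2, p.2.1)).bind fun y' => PZgXY (p.2.2, y') := by
  -- Notation for the inner bound kernel-like object
  have hB : Measurable fun r : X × Z => (PYgXZ r).bind (fun y => PZgXY (r.1, y)) := by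
    apply Measure.measurable_of_measurable_coe
    intro t ht
    have heq : (fun r : X × Z => ((PYgXZ r).bind (fun y => PZgXY (r.1, y))) t)
        = fun r : X × Z => ∫⁻ y, PZgXY (r.1, y) t ∂PYgXZ r := by
      funext r
      exact Measure.bind_apply ht (PZgXY.measurable.comp measurable_prodMk_left).aemeasurable
    rw [heq]
    exact Measurable.lintegral_kernel_prod_right
      ((PZgXY.measurable_coe ht).comp (by fun_prop))
  -- Measurability of the map q ↦ (PXgZ q.2).map (fun x => (q.1, q.2, x))
  have hf : Measurable fun q : Y × Z => (PXgZ q.2).map (fun x => (q.1, q.2, x)) := by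
    apply Measure.measurable_of_measurable_coe
    intro t ht
    have hw : Measurable fun w : (Y × Z) × X => (w.1.1, w.1.2, w.2) := by fun_prop
    have heq : (fun q : Y × Z => ((PXgZ q.2).map (fun x => (q.1, q.2, x))) t)
        = fun q : Y × Z => PXgZ q.2
            (Prod.mk q ⁻¹' ((fun w : (Y × Z) × X => (w.1.1, w.1.2, w.2)) ⁻¹' t)) := by
      funext q
      rw [Measure.map_apply (by fun_prop) ht]
      rfl
    rw [heq]
    exact Kernel.measurable_kernel_prodMk_left
      (κ := PXgZ.comap (Prod.snd : Y × Z → Z) measurable_snd) (hw ht)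
  haveI hPZ : IsProbabilityMeasure (Pi.map fun p : X × Y × Z => p.2.2) :=
    Measure.isProbabilityMeasure_map (by fun_prop)
  haveI hPXZ : IsProbabilityMeasure (Pi.map fun p : X × Y × Z => (p.1, p.2.2)) :=
    Measure.isProbabilityMeasure_map (by fun_prop)
  ext s hs
  rw [hPiStar]
  have hF : Measurable fun p : Y × Z × X =>
      (PYgXZ (p.2.2, p.2.1)).bind (fun y => PZgXY (p.2.2, y)) := by
    have := hB.comp (f := fun p : Y × Z × X => (p.2.2, p.2.1)) (by fun_prop)
    exact this
  rw [Measure.bind_apply hs hF.aemeasurable]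
  have hFs : Measurable fun p : Y × Z × X =>
      ((PYgXZ (p.2.2, p.2.1)).bind (fun y => PZgXY (p.2.2, y))) s := by
    have := (Measure.measurable_coe hs).comp hF
    exact this
  rw [Measure.lintegral_bind hf.aemeasurable hFs.aemeasurable]
  -- inner integral over the mapped measure
  have step1 : ∀ q : Y × Z,
      (∫⁻ p, ((PYgXZ (p.2.2, p.2.1)).bind (fun y => PZgXY (p.2.2, y))) s
        ∂((PXgZ q.2).map (fun x => (q.1, q.2, x))))
      = ∫⁻ x, ((PYgXZ (x, q.2)).bind (fun y => PZgXY (x, y))) s ∂PXgZ q.2 := by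
    intro q
    rw [lintegral_map hFs (by fun_prop)]
  simp_rw [step1]
  -- integrand depends only on q.2
  have hH : Measurable fun z : Z =>
      ∫⁻ x, ((PYgXZ (x, z)).bind (fun y => PZgXY (x, y))) s ∂PXgZ z := by
    apply Measurable.lintegral_kernel_prod_right
    have := ((Measure.measurable_coe hs).comp hB).comp
      (f := fun w : Z × X => (w.2, w.1)) (by fun_prop)
    exact this
  have step2 :
      (∫⁻ q : Y × Z, ∫⁻ x, ((PYgXZ (x, q.2)).bind (fun y => PZgXY (x, y))) s ∂PXgZ q.2
        ∂(Pi.map fun p : X × Y × Z => (p.2.1, p.2.2)))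
      = ∫⁻ z, ∫⁻ x, ((PYgXZ (x, z)).bind (fun y => PZgXY (x, y))) s ∂PXgZ z
        ∂(Pi.map fun p : X × Y × Z => p.2.2) := by
    rw [show (Pi.map fun p : X × Y × Z => p.2.2)
        = (Pi.map fun p : X × Y × Z => (p.2.1, p.2.2)).map Prod.snd by
      rw [Measure.map_map measurable_snd (by fun_prop)]; rfl]
    rw [lintegral_map hH measurable_snd]
  rw [step2]
  -- use hXgZ
  have hG : Measurable fun r : Z × X =>
      ((PYgXZ (r.2, r.1)).bind (fun y => PZgXY (r.2, y))) s := by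
    have := ((Measure.measurable_coe hs).comp hB).comp
      (f := fun r : Z × X => (r.2, r.1)) (by fun_prop)
    exact this
  rw [← Measure.lintegral_compProd hG, ← hXgZ, lintegral_map hG (by fun_prop)]
  -- use hYgXZ
  have hG2 : Measurable fun r : X × Z => ((PYgXZ r).bind (fun y => PZgXY (r.1, y))) s := by
    have := (Measure.measurable_coe hs).comp hB
    exact this
  have step3 : (∫⁻ p : X × Y × Z, ((PYgXZ (p.1, p.2.2)).bind (fun y => PZgXY (p.1, y))) s ∂Pi)
      = ∫⁻ r : X × Z, ((PYgXZ r).bind (fun y => PZgXY (r.1, y))) s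
          ∂(Pi.map fun p : X × Y × Z => (p.1, p.2.2)) := by
    rw [lintegral_map hG2 (by fun_prop)]
  rw [step3]
  have hBapp : (fun r : X × Z => ((PYgXZ r).bind (fun y => PZgXY (r.1, y))) s)
      = fun r : X × Z => ∫⁻ y, PZgXY (r.1, y) s ∂PYgXZ r := by
    funext r
    exact Measure.bind_apply hs (PZgXY.measurable.comp measurable_prodMk_left).aemeasurable
  rw [hBapp]
  have hG3 : Measurable fun w : (X × Z) × Y => PZgXY (w.1.1, w.2) s :=
    (PZgXY.measurable_coe hs).comp (by fun_prop)
  rw [← Measure.lintegral_compProd hG3, ← hYgXZ, lintegral_map hG3 (by fun_prop)]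
  -- use hZgXY
  have step4 : (∫⁻ p : X × Y × Z, PZgXY (p.1, p.2.1) s ∂Pi)
      = ∫⁻ q : X × Y, PZgXY q s ∂(Pi.map fun p : X × Y × Z => (p.1, p.2.1)) := by
    rw [lintegral_map (PZgXY.measurable_coe hs) (by fun_prop)]
  rw [step4]
  have step5 : (∫⁻ q : X × Y, PZgXY q s ∂(Pi.map fun p : X × Y × Z => (p.1, p.2.1)))
      = ((Pi.map fun p : X × Y × Z => (p.1, p.2.1)) ⊗ₘ PZgXY) (Set.univ ×ˢ s) := by
    rw [Measure.compProd_apply_prod MeasurableSet.univ hs, setLIntegral_univ]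
  rw [step5, ← hZgXY, Measure.map_apply (by fun_prop) (MeasurableSet.univ.prod hs),
    Measure.map_apply (by fun_prop) hs]
  congr 1
  ext p
  simp
end
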